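/- arXiv:1812.08638 — 6 statements merged into one kernel-verified Lean document; each statement's English description precedes it below -/
import Mathlib

section
/- Let g : ℝ^d → ℝ be a bounded measurable function and let β > -d. Then for almost every x ∈ ℝ^d, the limit as r → 0 of (1/r^{β+d}) ∫_{B(x,r)} ‖x-y‖^β g(y) dy equals (d·κ_d/(β+d))·g(x), where κ_d is the volume of the d-dimensional unit ball. -/
open MeasureTheory Filter Metric Set
open scoped ENNReal NNReal

/-- Geometric constant in the annuli estimate. -/
noncomputable def Kc (β dd : ℝ) : ℝ≥0∞ :=
  ENNReal.ofReal (max 1 ((2:ℝ) ^ (-β))) * (1 - ENNReal.ofReal ((2⁻¹:ℝ) ^ (β + dd)))⁻¹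

lemma Kc_lt_top (β dd : ℝ) (h : 0 < β + dd) : Kc β dd < ⊤ := by
  apply ENNReal.mul_lt_top ENNReal.ofReal_lt_top
  rw [ENNReal.inv_lt_top]
  rw [tsub_pos_iff_lt, ← ENNReal.ofReal_one]
  exact ENNReal.ofReal_lt_ofReal_iff_of_nonneg (Real.rpow_nonneg (by norm_num) _) |>.2
    (Real.rpow_lt_one (by norm_num) (by norm_num) h)

lemma key_ann {E : Type*} [NormedAddCommGroup E] [MeasurableSpace E]
    (μ : Measure E) (x : E) (r β dd : ℝ) (hr : 0 < r) (hβd : 0 < β + dd)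
    (h : E → ℝ≥0∞) (hh : Measurable h) (ε : ℝ≥0∞)
    (hball : ∀ s, 0 < s → s ≤ r → ∫⁻ y in closedBall x s, h y ∂μ ≤ ε * ENNReal.ofReal (s ^ dd)) :
    ∫⁻ y in closedBall x r \ {x}, ENNReal.ofReal (‖x - y‖ ^ β) * h y ∂μ
      ≤ Kc β dd * (ε * ENNReal.ofReal (r ^ (β + dd))) := by
  set m : ℝ := max 1 ((2:ℝ) ^ (-β)) with hm
  have hm1 : (1:ℝ) ≤ m := le_max_left _ _
  have hm0 : (0:ℝ) ≤ m := zero_le_one.trans hm1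
  set a : ℕ → ℝ := fun k => r * (2⁻¹:ℝ) ^ k with ha
  have ha_pos : ∀ k, 0 < a k := fun k => by positivity
  have ha_le : ∀ k, a k ≤ r := by
    intro k
    have : (2⁻¹:ℝ) ^ k ≤ 1 := pow_le_one₀ (by norm_num) (by norm_num)
    calc a k = r * (2⁻¹:ℝ)^k := rfl
      _ ≤ r * 1 := by nlinarith
      _ = r := mul_one r
  set A : ℕ → Set E := fun k => closedBall x (a k) \ closedBall x (a (k+1)) with hA
  -- cover
  have hcover : closedBall x r \ {x} ⊆ ⋃ k, A k := by
    rintro y ⟨hyr, hyx⟩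
    have hy0 : 0 < dist y x := dist_pos.2 (by simpa using hyx)
    have hexists : ∃ n : ℕ, r * (2⁻¹:ℝ) ^ (n+1) < dist y x := by
      obtain ⟨n, hn⟩ := exists_pow_lt_of_lt_one (div_pos hy0 hr) (by norm_num : (2⁻¹:ℝ) < 1)
      refine ⟨n, ?_⟩
      have h1 : r * (2⁻¹:ℝ)^n < dist y x := by
        rw [lt_div_iff₀ hr] at hn; linarith [hn]
      have h2 : (2⁻¹:ℝ)^(n+1) ≤ (2⁻¹:ℝ)^n := by
        have := pow_pos (by norm_num : (0:ℝ) < 2⁻¹) n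
        rw [pow_succ]; nlinarith
      nlinarith
    set k := Nat.find hexists with hk
    have hspec : r * (2⁻¹:ℝ) ^ (k+1) < dist y x := Nat.find_spec hexists
    have hup : dist y x ≤ a k := by
      rcases Nat.eq_zero_or_pos k with h0 | hpos
      · simpa [ha, h0] using (mem_closedBall.1 hyr)
      · obtain ⟨j, hj⟩ := Nat.exists_eq_add_of_lt hpos
        have hkj : k = j + 1 := by omega
        have hfm := Nat.find_min hexists (show j < k by omega)
        simp only [not_lt] at hfm
        calc dist y x ≤ r * (2⁻¹:ℝ) ^ (j+1) := hfm
          _ = a k := by rw [hkj]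
    exact mem_iUnion.2 ⟨k, ⟨mem_closedBall.2 hup,
      fun hmem => absurd (mem_closedBall.1 hmem) (not_le.2 hspec)⟩⟩
  set q : ℝ≥0∞ := ENNReal.ofReal ((2⁻¹:ℝ) ^ (β + dd)) with hq
  have hs0 : (0:ℝ) ≤ (2⁻¹:ℝ) ^ (β + dd) := Real.rpow_nonneg (by norm_num) _
  have hterm : ∀ k, ∫⁻ y in A k, ENNReal.ofReal (‖x - y‖ ^ β) * h y ∂μ
      ≤ (ENNReal.ofReal m * ε * ENNReal.ofReal (r ^ (β + dd))) * q ^ k := by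
    intro k
    have hw : ∀ y ∈ A k, ENNReal.ofReal (‖x - y‖ ^ β) * h y
        ≤ ENNReal.ofReal (m * a k ^ β) * h y := by
      rintro y ⟨hy1, hy2⟩
      have ht1 : ‖x - y‖ ≤ a k := by
        rw [norm_sub_rev, ← dist_eq_norm]; exact mem_closedBall.1 hy1
      have ht2 : a (k+1) < ‖x - y‖ := by
        rw [norm_sub_rev, ← dist_eq_norm]
        exact not_le.1 (fun hc => hy2 (mem_closedBall.2 hc))
      have ht0 : 0 < ‖x - y‖ := (ha_pos (k+1)).trans ht2
      have hbound : ‖x - y‖ ^ β ≤ m * a k ^ β := by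
        rcases le_or_gt 0 β with hβ0 | hβ0
        · have := Real.rpow_le_rpow ht0.le ht1 hβ0
          have hak : 0 ≤ a k ^ β := Real.rpow_nonneg (ha_pos k).le _
          nlinarith
        · have h1 : ‖x - y‖ ^ β ≤ a (k+1) ^ β :=
            Real.rpow_le_rpow_of_nonpos (ha_pos (k+1)) ht2.le hβ0.le
          have h2 : a (k+1) ^ β = a k ^ β * (2:ℝ) ^ (-β) := by
            have : a (k+1) = a k * 2⁻¹ := by rw [ha]; ring
            rw [this, Real.mul_rpow (ha_pos k).le (by norm_num),
              Real.inv_rpow (by norm_num), ← Real.rpow_neg (by norm_num)]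
          have h3 : (2:ℝ) ^ (-β) ≤ m := le_max_right _ _
          have hak : 0 ≤ a k ^ β := Real.rpow_nonneg (ha_pos k).le _
          nlinarith
      exact mul_le_mul_left (ENNReal.ofReal_le_ofReal hbound) _
    calc ∫⁻ y in A k, ENNReal.ofReal (‖x - y‖ ^ β) * h y ∂μ
        ≤ ∫⁻ y in A k, ENNReal.ofReal (m * a k ^ β) * h y ∂μ := by
          apply setLIntegral_mono (by fun_prop) hw
      _ ≤ ∫⁻ y in closedBall x (a k), ENNReal.ofReal (m * a k ^ β) * h y ∂μ :=
          lintegral_mono_set diff_subset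
      _ = ENNReal.ofReal (m * a k ^ β) * ∫⁻ y in closedBall x (a k), h y ∂μ :=
          lintegral_const_mul _ hh
      _ ≤ ENNReal.ofReal (m * a k ^ β) * (ε * ENNReal.ofReal (a k ^ dd)) :=
          mul_le_mul_right (hball _ (ha_pos k) (ha_le k)) _
      _ = (ENNReal.ofReal m * ε * ENNReal.ofReal (r ^ (β + dd))) * q ^ k := by
          rw [ENNReal.ofReal_mul hm0]
          have hkey : ENNReal.ofReal (a k ^ β) * ENNReal.ofReal (a k ^ dd)
              = ENNReal.ofReal (r ^ (β + dd)) * q ^ k := by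
            rw [← ENNReal.ofReal_mul (Real.rpow_nonneg (ha_pos k).le _),
              ← Real.rpow_add (ha_pos k)]
            have hsplit : a k ^ (β + dd) = r ^ (β + dd) * ((2⁻¹:ℝ) ^ (β + dd)) ^ k := by
              rw [ha]
              rw [Real.mul_rpow hr.le (by positivity), ← Real.rpow_natCast ((2⁻¹:ℝ)) k,
                ← Real.rpow_mul (by norm_num), mul_comm (k:ℝ) (β+dd),
                Real.rpow_mul (by norm_num), Real.rpow_natCast]
            rw [hsplit, ENNReal.ofReal_mul (Real.rpow_nonneg hr.le _), ENNReal.ofReal_pow hs0]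
          rw [show ENNReal.ofReal m * ENNReal.ofReal (a k ^ β) * (ε * ENNReal.ofReal (a k ^ dd))
              = ENNReal.ofReal m * ε * (ENNReal.ofReal (a k ^ β) * ENNReal.ofReal (a k ^ dd)) by
            ring]
          rw [hkey]; ring
  calc ∫⁻ y in closedBall x r \ {x}, ENNReal.ofReal (‖x - y‖ ^ β) * h y ∂μ
      ≤ ∫⁻ y in ⋃ k, A k, ENNReal.ofReal (‖x - y‖ ^ β) * h y ∂μ :=
        lintegral_mono_set hcover
    _ ≤ ∑' k, ∫⁻ y in A k, ENNReal.ofReal (‖x - y‖ ^ β) * h y ∂μ := lintegral_iUnion_le _ _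
    _ ≤ ∑' k, (ENNReal.ofReal m * ε * ENNReal.ofReal (r ^ (β + dd))) * q ^ k :=
        ENNReal.tsum_le_tsum hterm
    _ = (ENNReal.ofReal m * ε * ENNReal.ofReal (r ^ (β + dd))) * (1 - q)⁻¹ := by
        rw [ENNReal.tsum_mul_left, ENNReal.tsum_geometric]
    _ = Kc β dd * (ε * ENNReal.ofReal (r ^ (β + dd))) := by rw [Kc]; ring

/-- Annuli estimate on the full closed ball (center removed for free since it is null). -/
lemma key_ball {E : Type*} [NormedAddCommGroup E] [MeasurableSpace E]
    (μ : Measure E) (hx0 : ∀ z : E, μ {z} = 0) (x : E) (r β dd : ℝ) (hr : 0 < r)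
    (hβd : 0 < β + dd) (h : E → ℝ≥0∞) (hh : Measurable h) (ε : ℝ≥0∞)
    (hball : ∀ s, 0 < s → s ≤ r → ∫⁻ y in closedBall x s, h y ∂μ ≤ ε * ENNReal.ofReal (s ^ dd)) :
    ∫⁻ y in closedBall x r, ENNReal.ofReal (‖x - y‖ ^ β) * h y ∂μ
      ≤ Kc β dd * (ε * ENNReal.ofReal (r ^ (β + dd))) := by
  have hres : μ.restrict (closedBall x r) = μ.restrict (closedBall x r \ {x}) :=
    (Measure.restrict_congr_set (diff_ae_eq_self.2
      (measure_mono_null inter_subset_right (hx0 x)))).symm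
  rw [hres]
  exact key_ann μ x r β dd hr hβd h hh ε hball

lemma stepA (d : ℕ) (hd : 1 ≤ d) (β : ℝ) (hβd : 0 < β + d)
    (x : EuclideanSpace ℝ (Fin d)) (r : ℝ) (hr : 0 < r) :
    ∫ y in closedBall x r, ‖x - y‖ ^ β
      = ((d : ℝ) * (volume (closedBall (0 : EuclideanSpace ℝ (Fin d)) 1)).toReal / (β + d))
        * r ^ (β + (d : ℝ)) := by
  haveI : Nontrivial (EuclideanSpace ℝ (Fin d)) := by
    apply Module.nontrivial_of_finrank_pos (R := ℝ)
    rw [finrank_euclideanSpace_fin]; omega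
  have hdim : Module.finrank ℝ (EuclideanSpace ℝ (Fin d)) = d := finrank_euclideanSpace_fin
  set f₀ : ℝ → ℝ := (Iic r).indicator (fun t => t ^ β) with hf₀
  have step1 : ∫ y in closedBall x r, ‖x - y‖ ^ β
      = ∫ z : EuclideanSpace ℝ (Fin d), f₀ ‖z‖ := by
    rw [← integral_indicator (measurableSet_closedBall)]
    rw [← integral_sub_left_eq_self (fun z => f₀ ‖z‖) volume x]
    congr 1
    funext y
    by_cases hy : y ∈ closedBall x r
    · rw [indicator_of_mem hy]
      have : ‖x - y‖ ≤ r := by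
        rw [norm_sub_rev, ← dist_eq_norm]; exact mem_closedBall.1 hy
      simp [hf₀, indicator_of_mem, this]
    · rw [indicator_of_notMem hy]
      have : ¬ (‖x - y‖ ≤ r) := by
        rw [norm_sub_rev, ← dist_eq_norm]
        exact fun hc => hy (mem_closedBall.2 hc)
      simp [hf₀, indicator_of_notMem, this]
  rw [step1, integral_fun_norm_addHaar volume f₀, hdim]
  have step2 : ∫ t in Ioi (0:ℝ), t ^ (d - 1) • f₀ t = r ^ (β + d) / (β + d) := by
    have heq : ∀ t : ℝ, t ^ (d - 1) • f₀ t
        = (Iic r).indicator (fun t => t ^ (d-1) * t ^ β) t := by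
      intro t
      simp only [smul_eq_mul, hf₀, indicator_apply]
      split_ifs <;> simp
    rw [integral_congr_ae (Eventually.of_forall fun t => heq t)]
    rw [setIntegral_indicator measurableSet_Iic, Set.Ioi_inter_Iic]
    have heq2 : ∀ t ∈ Ioc (0:ℝ) r, t ^ (d-1) * t ^ β = t ^ (β + (d:ℝ) - 1) := by
      intro t ht
      have h1 : (t:ℝ) ^ (d-1 : ℕ) = t ^ ((d:ℝ) - 1) := by
        rw [← Real.rpow_natCast t (d-1), Nat.cast_sub hd, Nat.cast_one]
      rw [h1, ← Real.rpow_add ht.1]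
      ring_nf
    rw [setIntegral_congr_fun measurableSet_Ioc heq2]
    rw [← intervalIntegral.integral_of_le hr.le]
    rw [integral_rpow (Or.inl (by linarith))]
    rw [Real.zero_rpow (by linarith), sub_add_cancel]
    norm_num
  rw [step2]
  rw [Measure.addHaar_closedBall_eq_addHaar_ball]
  simp only [nsmul_eq_mul, smul_eq_mul, measureReal_def]
  ring

lemma wMeasurable (d : ℕ) (β : ℝ) (x : EuclideanSpace ℝ (Fin d)) :
    Measurable (fun y : EuclideanSpace ℝ (Fin d) => ‖x - y‖ ^ β) := by
  fun_prop

lemma intW (d : ℕ) (hd : 1 ≤ d) (β : ℝ) (hβd : 0 < β + (d:ℝ))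
    (x : EuclideanSpace ℝ (Fin d)) (r : ℝ) (hr : 0 < r) :
    IntegrableOn (fun y => ‖x - y‖ ^ β) (closedBall x r) volume := by
  haveI : Nontrivial (EuclideanSpace ℝ (Fin d)) := by
    apply Module.nontrivial_of_finrank_pos (R := ℝ)
    rw [finrank_euclideanSpace_fin]; omega
  constructor
  · exact (wMeasurable d β x).aestronglyMeasurable
  · rw [hasFiniteIntegral_iff_ofReal (Eventually.of_forall fun y =>
      Real.rpow_nonneg (norm_nonneg _) _)]
    have hball : ∀ s, 0 < s → s ≤ r →
        ∫⁻ y in closedBall x s, (1:ℝ≥0∞) ∂volume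
          ≤ (volume (closedBall (0 : EuclideanSpace ℝ (Fin d)) 1)) * ENNReal.ofReal (s ^ (d:ℝ)) := by
      intro s hs hsr
      rw [setLIntegral_one, Measure.addHaar_closedBall' volume x hs.le,
        finrank_euclideanSpace_fin, ← Real.rpow_natCast s d]
      exact le_of_eq (mul_comm _ _)
    have := key_ball volume (fun z => measure_singleton z) x r β (d:ℝ) hr hβd
      (fun _ => 1) measurable_const _ hball
    simp only [mul_one] at this
    exact this.trans_lt (ENNReal.mul_lt_top (Kc_lt_top _ _ hβd)
      (ENNReal.mul_lt_top measure_closedBall_lt_top ENNReal.ofReal_lt_top))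

set_option maxHeartbeats 1000000 in
/-- Weighted Lebesgue differentiation: for bounded measurable `g` and `β > -d`, for a.e. `x`,
`(1/r^(β+d)) ∫_{B(x,r)} ‖x-y‖^β g(y) dy → (d κ_d/(β+d)) g(x)` as `r → 0⁺`. -/
theorem stmt0 (d : ℕ) (hd : 1 ≤ d) (g : EuclideanSpace ℝ (Fin d) → ℝ)
    (hg : Measurable g) (C : ℝ) (hC : ∀ y, |g y| ≤ C)
    (β : ℝ) (hβ : -(d : ℝ) < β)
    (κ : ℝ) (hκ : κ = (volume (closedBall (0 : EuclideanSpace ℝ (Fin d)) 1)).toReal) :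
    ∀ᵐ x : EuclideanSpace ℝ (Fin d), Tendsto
      (fun r : ℝ => (1 / r ^ (β + (d : ℝ))) * ∫ y in closedBall x r, ‖x - y‖ ^ β * g y)
      (nhdsWithin 0 (Ioi 0)) (nhds (((d : ℝ) * κ / (β + (d : ℝ))) * g x)) := by
  have hβd : 0 < β + (d : ℝ) := by linarith
  haveI : Nontrivial (EuclideanSpace ℝ (Fin d)) := by
    apply Module.nontrivial_of_finrank_pos (R := ℝ)
    rw [finrank_euclideanSpace_fin]; omega
  have hκ0 : 0 ≤ κ := hκ ▸ ENNReal.toReal_nonneg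
  have hgint : ∀ (x : EuclideanSpace ℝ (Fin d)) (r : ℝ),
      IntegrableOn g (closedBall x r) volume := by
    intro x r
    apply Measure.integrableOn_of_bounded measure_closedBall_lt_top.ne hg.aestronglyMeasurable
    exact Eventually.of_forall fun y => by simpa [Real.norm_eq_abs] using hC y
  have hgloc : LocallyIntegrable g volume :=
    fun x => ⟨closedBall x 1, closedBall_mem_nhds x one_pos, hgint x 1⟩
  have hbes := (Besicovitch.vitaliFamily
    (volume : Measure (EuclideanSpace ℝ (Fin d)))).ae_tendsto_average_norm_sub hgloc
  filter_upwards [hbes] with x hx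
  have hx' : Tendsto (fun r => ⨍ y in closedBall x r, ‖g y - g x‖ ∂volume)
      (nhdsWithin 0 (Ioi 0)) (nhds 0) :=
    hx.comp (Besicovitch.tendsto_filterAt volume x)
  -- integrability facts
  have hC0 : 0 ≤ C := (abs_nonneg _).trans (hC x)
  have hwnn : ∀ y : EuclideanSpace ℝ (Fin d), 0 ≤ ‖x - y‖ ^ β :=
    fun y => Real.rpow_nonneg (norm_nonneg _) _
  have hint1 : ∀ r : ℝ, 0 < r → IntegrableOn
      (fun y => ‖x - y‖ ^ β * (g y - g x)) (closedBall x r) volume := by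
    intro r hr
    apply Integrable.mono' ((intW d hd β hβd x r hr).const_mul (C + |g x|))
    · exact ((wMeasurable d β x).mul ((hg.sub measurable_const))).aestronglyMeasurable
    · apply Eventually.of_forall
      intro y
      rw [Real.norm_eq_abs, abs_mul, abs_of_nonneg (hwnn y)]
      have h1 : |g y - g x| ≤ C + |g x| := (abs_sub _ _).trans (by linarith [hC y])
      have := hwnn y
      nlinarith
  have hint2 : ∀ r : ℝ, 0 < r → IntegrableOn
      (fun y => ‖x - y‖ ^ β * g y) (closedBall x r) volume := by
    intro r hr
    apply Integrable.mono' ((intW d hd β hβd x r hr).const_mul C)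
    · exact ((wMeasurable d β x).mul hg).aestronglyMeasurable
    · apply Eventually.of_forall
      intro y
      rw [Real.norm_eq_abs, abs_mul, abs_of_nonneg (hwnn y)]
      have := hwnn y
      have := hC y
      nlinarith
  -- splitting identity
  have hsplit : ∀ r : ℝ, 0 < r →
      ∫ y in closedBall x r, ‖x - y‖ ^ β * g y
        = g x * (((d:ℝ) * κ / (β + d)) * r ^ (β + (d:ℝ)))
          + ∫ y in closedBall x r, ‖x - y‖ ^ β * (g y - g x) := by
    intro r hr
    have heq : ∀ y : EuclideanSpace ℝ (Fin d), ‖x - y‖ ^ β * g y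
        = ‖x - y‖ ^ β * (g y - g x) + g x * ‖x - y‖ ^ β := fun y => by ring
    rw [integral_congr_ae (Eventually.of_forall fun y => heq y)]
    rw [integral_add (hint1 r hr) ((intW d hd β hβd x r hr).const_mul (g x))]
    rw [integral_const_mul, stepA d hd β hβd x r hr, ← hκ]
    ring
  -- error term tends to zero
  have herr : Tendsto (fun r => (1 / r ^ (β + (d:ℝ)))
      * ∫ y in closedBall x r, ‖x - y‖ ^ β * (g y - g x))
      (nhdsWithin 0 (Ioi 0)) (nhds 0) := by
    rw [NormedAddCommGroup.tendsto_nhds_zero]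
    intro ε0 hε0
    set K := (Kc β (d:ℝ)).toReal with hK
    have hK0 : 0 ≤ K := ENNReal.toReal_nonneg
    set ε := ε0 / (2 * (K * (κ + 1) + 1)) with hε
    have hεpos : 0 < ε := by positivity
    have hev := hx'.eventually (gt_mem_nhds hεpos)
    obtain ⟨δ, hδ0, hδ⟩ := Metric.mem_nhdsWithin_iff.1 hev
    filter_upwards [Ioo_mem_nhdsGT_of_mem (⟨le_refl 0, hδ0⟩ : (0:ℝ) ∈ Ico 0 δ)]
    rintro r ⟨hr0, hrδ⟩
    -- small-ball mass bounds
    have hballs : ∀ s, 0 < s → s ≤ r →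
        ∫⁻ y in closedBall x s, ENNReal.ofReal |g y - g x| ∂volume
          ≤ ENNReal.ofReal (ε * κ) * ENNReal.ofReal (s ^ (d:ℝ)) := by
      intro s hs hsr
      have havg : ⨍ y in closedBall x s, ‖g y - g x‖ ∂volume < ε := by
        refine hδ ⟨?_, mem_Ioi.2 hs⟩
        rw [mem_ball, Real.dist_eq, sub_zero, abs_of_pos hs]
        exact lt_of_le_of_lt hsr hrδ
      have hμpos : 0 < volume (closedBall x s) := measure_closedBall_pos volume x hs
      have hμlt : volume (closedBall x s) < ⊤ := measure_closedBall_lt_top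
      have h0 : 0 < (volume (closedBall x s)).toReal :=
        ENNReal.toReal_pos hμpos.ne' hμlt.ne
      have hintabs : IntegrableOn (fun y => |g y - g x|) (closedBall x s) volume :=
        ((hgint x s).sub (integrableOn_const hμlt.ne)).abs
      have hIle : ∫ y in closedBall x s, |g y - g x|
          ≤ ε * (volume (closedBall x s)).toReal := by
        rw [setAverage_eq] at havg
        simp only [smul_eq_mul, Real.norm_eq_abs, measureReal_def] at havg
        rw [inv_mul_lt_iff₀ h0] at havg
        nlinarith
      have hlin : ∫⁻ y in closedBall x s, ENNReal.ofReal |g y - g x| ∂volume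
          = ENNReal.ofReal (∫ y in closedBall x s, |g y - g x|) :=
        (ofReal_integral_eq_lintegral_ofReal hintabs
          (Eventually.of_forall fun y => abs_nonneg _)).symm
      rw [hlin]
      have hvol : (volume (closedBall x s)).toReal = s ^ (d:ℝ) * κ := by
        rw [Measure.addHaar_closedBall' volume x hs.le, finrank_euclideanSpace_fin,
          ENNReal.toReal_mul, ENNReal.toReal_ofReal (by positivity), hκ,
          ← Real.rpow_natCast s d]
      rw [← ENNReal.ofReal_mul (by positivity)]
      apply ENNReal.ofReal_le_ofReal
      rw [hvol] at hIle
      nlinarith [Real.rpow_nonneg hs.le (d:ℝ)]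
    have hkey := key_ball volume (fun z => measure_singleton z) x r β (d:ℝ) hr0 hβd
      (fun y => ENNReal.ofReal |g y - g x|) (by fun_prop) _ hballs
    -- convert to a real bound on the error integral
    have hErr : |∫ y in closedBall x r, ‖x - y‖ ^ β * (g y - g x)|
        ≤ K * (ε * κ) * r ^ (β + (d:ℝ)) := by
      have h1 : |∫ y in closedBall x r, ‖x - y‖ ^ β * (g y - g x)|
          ≤ ∫ y in closedBall x r, ‖‖x - y‖ ^ β * (g y - g x)‖ := by
        rw [← Real.norm_eq_abs]
        exact norm_integral_le_integral_norm _
      have h2 : ∫ y in closedBall x r, ‖‖x - y‖ ^ β * (g y - g x)‖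
          = (∫⁻ y in closedBall x r,
              ENNReal.ofReal (‖x - y‖ ^ β) * ENNReal.ofReal |g y - g x| ∂volume).toReal := by
        rw [integral_eq_lintegral_of_nonneg_ae (f := fun y => ‖‖x - y‖ ^ β * (g y - g x)‖) (Eventually.of_forall fun y => norm_nonneg _)
          ((wMeasurable d β x).mul (hg.sub measurable_const)).norm.aestronglyMeasurable]
        congr 1
        apply lintegral_congr
        intro y
        rw [Real.norm_eq_abs, abs_mul, abs_of_nonneg (hwnn y),
          ENNReal.ofReal_mul (hwnn y)]
      have hfin : Kc β (d:ℝ) * (ENNReal.ofReal (ε * κ) * ENNReal.ofReal (r ^ (β + (d:ℝ)))) ≠ ⊤ :=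
        (ENNReal.mul_lt_top (Kc_lt_top _ _ hβd)
          (ENNReal.mul_lt_top ENNReal.ofReal_lt_top ENNReal.ofReal_lt_top)).ne
      have h3 : (∫⁻ y in closedBall x r,
            ENNReal.ofReal (‖x - y‖ ^ β) * ENNReal.ofReal |g y - g x| ∂volume).toReal
          ≤ K * (ε * κ) * r ^ (β + (d:ℝ)) := by
        have := ENNReal.toReal_mono hfin hkey
        rw [ENNReal.toReal_mul, ENNReal.toReal_mul,
          ENNReal.toReal_ofReal (by positivity),
          ENNReal.toReal_ofReal (Real.rpow_nonneg hr0.le _)] at this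
        calc _ ≤ K * (ε * κ * r ^ (β + (d:ℝ))) := this
          _ = K * (ε * κ) * r ^ (β + (d:ℝ)) := by ring
      calc |∫ y in closedBall x r, ‖x - y‖ ^ β * (g y - g x)|
          ≤ ∫ y in closedBall x r, ‖‖x - y‖ ^ β * (g y - g x)‖ := h1
        _ = _ := h2
        _ ≤ _ := h3
    -- final numeric computation
    have hrp : 0 < r ^ (β + (d:ℝ)) := Real.rpow_pos_of_pos hr0 _
    rw [Real.norm_eq_abs, abs_mul]
    have habs1 : |1 / r ^ (β + (d:ℝ))| = 1 / r ^ (β + (d:ℝ)) := abs_of_pos (by positivity)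
    rw [habs1]
    have hle : 1 / r ^ (β + (d:ℝ)) * |∫ y in closedBall x r, ‖x - y‖ ^ β * (g y - g x)|
        ≤ K * (ε * κ) := by
      rw [div_mul_eq_mul_div, one_mul, div_le_iff₀ hrp]
      calc |∫ y in closedBall x r, ‖x - y‖ ^ β * (g y - g x)|
          ≤ K * (ε * κ) * r ^ (β + (d:ℝ)) := hErr
        _ = K * (ε * κ) * r ^ (β + (d:ℝ)) := rfl
    have hD : 0 < K * (κ + 1) + 1 := by nlinarith
    have h1 : K * (ε * κ) ≤ (K * (κ + 1) + 1) * ε := by nlinarith [hεpos.le]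
    have h2 : (K * (κ + 1) + 1) * ε = ε0 / 2 := by
      rw [hε]; field_simp
    linarith
  -- assemble
  have hfinal : Tendsto (fun r : ℝ => ((d:ℝ) * κ / (β + (d:ℝ))) * g x
      + (1 / r ^ (β + (d:ℝ))) * ∫ y in closedBall x r, ‖x - y‖ ^ β * (g y - g x))
      (nhdsWithin 0 (Ioi 0)) (nhds (((d:ℝ) * κ / (β + (d:ℝ))) * g x)) := by
    have hconst : Tendsto (fun _ : ℝ => ((d:ℝ) * κ / (β + (d:ℝ))) * g x)
        (nhdsWithin (0:ℝ) (Ioi 0)) (nhds (((d:ℝ) * κ / (β + (d:ℝ))) * g x)) :=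
      tendsto_const_nhds
    have h := hconst.add herr
    rw [add_zero] at h
    exact h
  apply Tendsto.congr' _ hfinal
  filter_upwards [self_mem_nhdsWithin] with r hr
  have hr0 : (0:ℝ) < r := hr
  have hrp : r ^ (β + (d:ℝ)) ≠ 0 := (Real.rpow_pos_of_pos hr0 _).ne'
  rw [hsplit r hr0]
  field_simp
end

section
/- Let W ⊂ ℝ^d be measurable with Vol(W) = 1, let f ∈ L^2(W) be a probability density on W, let β > -d, and let (r_n) be a positive sequence with r_n → 0. Then lim_{n→∞} r_n^{-(β+d)} ∫_{W×W} 1{‖x-y‖ ≤ r_n} ‖x-y‖^β f(x) f(y) d(x,y) = (d·κ_d/(β+d)) ∫_W f(x)^2 dx. -/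
open MeasureTheory Filter Metric Set
open scoped ENNReal Topology Pointwise

section Aux

lemma aux_meas (d : ℕ) (β : ℝ) : Measurable fun z : EuclideanSpace ℝ (Fin d) => ‖z‖ ^ β :=
  measurable_norm.pow measurable_const

lemma aux_intOn (d : ℕ) (hd : 1 ≤ d) (β : ℝ) (hβ : -(d:ℝ) < β) (R : ℝ) (hR : 0 < R) :
    IntegrableOn (fun z : EuclideanSpace ℝ (Fin d) => ‖z‖ ^ β) (closedBall 0 R) := by
  haveI : Nontrivial (EuclideanSpace ℝ (Fin d)) :=
    Module.nontrivial_of_finrank_pos (R := ℝ)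
      (by simp only [finrank_euclideanSpace, Fintype.card_fin]; omega)
  have hmeas := aux_meas d β
  rcases le_or_gt 0 β with hβ0 | hβ0
  · refine Measure.integrableOn_of_bounded measure_closedBall_lt_top.ne
      hmeas.aestronglyMeasurable (M := R ^ β) ?_
    filter_upwards [ae_restrict_mem measurableSet_closedBall] with z hz
    rw [Real.norm_eq_abs, abs_of_nonneg (Real.rpow_nonneg (norm_nonneg _) _)]
    exact Real.rpow_le_rpow (norm_nonneg _) (mem_closedBall_zero_iff.1 hz) hβ0
  · set q : ℝ := 1/2 with hq
    have hq0 : 0 < q := by norm_num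
    have hq1 : q < 1 := by norm_num
    set c : ℕ → ℝ := fun n => R * q ^ n with hc
    have hcpos : ∀ n, 0 < c n := fun n => mul_pos hR (by positivity)
    set s : ℕ → Set (EuclideanSpace ℝ (Fin d)) :=
      fun n => closedBall 0 (c n) \ closedBall 0 (c (n+1)) with hs
    have hsm : ∀ n, MeasurableSet (s n) :=
      fun n => measurableSet_closedBall.diff measurableSet_closedBall
    -- bound on the annulus
    have hbound : ∀ n, ∀ z ∈ s n, ‖z‖ ^ β ≤ c (n+1) ^ β := by
      intro n z hz
      have h1 : c (n+1) < ‖z‖ := by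
        have := hz.2
        rw [mem_closedBall_zero_iff] at this
        exact lt_of_not_ge this
      exact Real.rpow_le_rpow_of_nonpos (hcpos _) h1.le hβ0.le
    have hsfin : ∀ n, volume (s n) < ∞ :=
      fun n => lt_of_le_of_lt (measure_mono diff_subset) measure_closedBall_lt_top
    have hint : ∀ n, IntegrableOn (fun z : EuclideanSpace ℝ (Fin d) => ‖z‖ ^ β) (s n) := by
      intro n
      refine Measure.integrableOn_of_bounded (hsfin n).ne hmeas.aestronglyMeasurable
        (M := c (n+1) ^ β) ?_
      filter_upwards [ae_restrict_mem (hsm n)] with z hz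
      rw [Real.norm_eq_abs, abs_of_nonneg (Real.rpow_nonneg (norm_nonneg _) _)]
      exact hbound n z hz
    -- the covering
    have hcover : closedBall (0 : EuclideanSpace ℝ (Fin d)) R ⊆ {0} ∪ ⋃ n, s n := by
      intro z hz
      rcases eq_or_ne z 0 with rfl | hz0
      · exact Or.inl rfl
      right
      have hz0' : 0 < ‖z‖ := norm_pos_iff.2 hz0
      have hlim : Tendsto c atTop (𝓝 0) := by
        have h₁ := tendsto_pow_atTop_nhds_zero_of_lt_one hq0.le hq1
        have := h₁.const_mul R
        simpa [hc] using this
      have hex : ∃ n, c (n+1) < ‖z‖ := by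
        obtain ⟨N, hN⟩ := (hlim.eventually (eventually_lt_nhds hz0')).exists_forall_of_atTop
        exact ⟨N, hN (N+1) (by omega)⟩
      refine mem_iUnion.2 ⟨Nat.find hex, ?_, ?_⟩
      · rw [mem_closedBall_zero_iff]
        rcases Nat.eq_zero_or_pos (Nat.find hex) with h0 | hpos
        · rw [h0]
          simpa [hc] using mem_closedBall_zero_iff.1 hz
        · have hmin := Nat.find_min hex (Nat.sub_lt hpos one_pos)
          push_neg at hmin
          have heq : Nat.find hex - 1 + 1 = Nat.find hex := by omega
          rwa [heq] at hmin
      · rw [mem_closedBall_zero_iff]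
        exact not_le.2 (Nat.find_spec hex)
    refine IntegrableOn.mono_set ?_ hcover
    refine IntegrableOn.union ?_ ?_
    · unfold IntegrableOn
      rw [Measure.restrict_zero_set (measure_singleton _)]
      exact integrable_zero_measure
    · refine integrableOn_iUnion_of_summable_integral_norm hint ?_
      set B : ℝ := (volume (ball (0 : EuclideanSpace ℝ (Fin d)) 1)).toReal with hB
      have hBnn : 0 ≤ B := ENNReal.toReal_nonneg
      set b : ℕ → ℝ := fun n => c (n+1) ^ β * (c n ^ d * B) with hb
      have hterm : ∀ n, (∫ z in s n, |‖z‖ ^ β|) ≤ b n := by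
        intro n
        have h1 : (∫ z in s n, |‖z‖ ^ β|)
            = ∫ z in s n, ‖z‖ ^ β := by
          refine setIntegral_congr_fun (hsm n) (fun z _ => ?_)
          rw [abs_of_nonneg (Real.rpow_nonneg (norm_nonneg _) _)]
        rw [h1]
        have h2 : (∫ z in s n, ‖z‖ ^ β) ≤ ∫ _z in s n, c (n+1) ^ β :=
          setIntegral_mono_on (hint n) (integrableOn_const (hsfin n).ne)
            (hsm n) (hbound n)
        refine h2.trans ?_
        rw [setIntegral_const, smul_eq_mul]
        have h3 : (volume (s n)).toReal ≤ c n ^ d * B := by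
          have h4 : volume (s n) ≤ volume (closedBall (0 : EuclideanSpace ℝ (Fin d)) (c n)) :=
            measure_mono diff_subset
          have h5 : volume (closedBall (0 : EuclideanSpace ℝ (Fin d)) (c n))
              = ENNReal.ofReal (c n ^ Module.finrank ℝ (EuclideanSpace ℝ (Fin d))) *
                volume (ball (0 : EuclideanSpace ℝ (Fin d)) 1) :=
            Measure.addHaar_closedBall _ _ (hcpos n).le
          have h6 := ENNReal.toReal_mono (by
            rw [h5]
            exact ENNReal.mul_ne_top ENNReal.ofReal_ne_top measure_ball_lt_top.ne) h4
          refine h6.trans ?_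
          rw [h5, ENNReal.toReal_mul, ENNReal.toReal_ofReal (by positivity)]
          simp only [finrank_euclideanSpace, Fintype.card_fin]
          exact le_refl _
        calc (volume (s n)).toReal * c (n+1) ^ β
            ≤ (c n ^ d * B) * c (n+1) ^ β := by
              apply mul_le_mul_of_nonneg_right h3 (Real.rpow_nonneg (hcpos _).le _)
          _ = b n := by ring
      simp only [Real.norm_eq_abs]
      refine Summable.of_nonneg_of_le
        (fun n => setIntegral_nonneg (hsm n) (fun z _ => abs_nonneg _)) hterm ?_
      -- b n = K * ρ^n
      set ρ : ℝ := q ^ β * q ^ d with hρ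
      set K : ℝ := (R * q) ^ β * (R ^ d * B) with hK
      have hbe : b = fun n => K * ρ ^ n := by
        funext n
        have e1 : c (n+1) ^ β = (R * q) ^ β * (q ^ β) ^ n := by
          have : c (n+1) = (R * q) * q ^ n := by rw [hc]; ring
          rw [this, Real.mul_rpow (by positivity) (by positivity)]
          congr 1
          rw [← Real.rpow_natCast q n, ← Real.rpow_mul hq0.le, mul_comm (n:ℝ) β,
            Real.rpow_mul hq0.le, Real.rpow_natCast]
        have e2 : c n ^ d = R ^ d * (q ^ d) ^ n := by
          rw [hc]; rw [mul_pow, ← pow_mul, ← pow_mul, Nat.mul_comm]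
        show c (n + 1) ^ β * (c n ^ d * B) = K * ρ ^ n
        rw [e1, e2, hρ, hK]
        rw [mul_pow]
        ring
      rw [hbe]
      refine Summable.mul_left K ?_
      refine summable_geometric_of_lt_one (by positivity) ?_
      have : ρ = q ^ (β + (d:ℝ)) := by
        rw [hρ, Real.rpow_add hq0, Real.rpow_natCast]
      rw [this]
      exact Real.rpow_lt_one hq0.le hq1 (by linarith)


lemma aux_val (d : ℕ) (hd : 1 ≤ d) (β : ℝ) (hβ : -(d:ℝ) < β) :
    ∫ u in closedBall (0 : EuclideanSpace ℝ (Fin d)) 1, ‖u‖ ^ β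
      = (d : ℝ) * (volume (closedBall (0 : EuclideanSpace ℝ (Fin d)) 1)).toReal / (β + d) := by
  haveI : Nontrivial (EuclideanSpace ℝ (Fin d)) :=
    Module.nontrivial_of_finrank_pos (R := ℝ)
      (by simp only [finrank_euclideanSpace, Fintype.card_fin]; omega)
  set g : ℝ → ℝ := fun t => if t ≤ 1 then t ^ β else 0 with hg
  have h1 : ∫ u in closedBall (0 : EuclideanSpace ℝ (Fin d)) 1, ‖u‖ ^ β
      = ∫ u : EuclideanSpace ℝ (Fin d), g ‖u‖ := by
    rw [← integral_indicator measurableSet_closedBall]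
    congr 1
    funext u
    by_cases h : u ∈ closedBall (0 : EuclideanSpace ℝ (Fin d)) 1
    · rw [indicator_of_mem h, hg]
      simp only [if_pos (mem_closedBall_zero_iff.1 h)]
    · rw [indicator_of_notMem h, hg]
      simp only [if_neg (fun hc => h (mem_closedBall_zero_iff.2 hc))]
  rw [h1, integral_fun_norm_addHaar volume g]
  have hfr : Module.finrank ℝ (EuclideanSpace ℝ (Fin d)) = d := by
    simp [finrank_euclideanSpace]
  rw [hfr]
  have h2 : ∫ y in Ioi (0:ℝ), y ^ (d - 1) • g y
      = ∫ y in Ioi (0:ℝ), (Ioc (0:ℝ) 1).indicator (fun y => y ^ (β + d - 1)) y := by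
    refine setIntegral_congr_fun measurableSet_Ioi (fun y hy => ?_)
    have hy0 : (0:ℝ) < y := hy
    by_cases h : y ≤ 1
    · rw [indicator_of_mem (show y ∈ Ioc (0:ℝ) 1 from ⟨hy0, h⟩), hg]
      simp only [if_pos h, smul_eq_mul]
      rw [← Real.rpow_natCast y (d-1), ← Real.rpow_add hy0]
      congr 1
      have : ((d - 1 : ℕ) : ℝ) = (d : ℝ) - 1 := by
        rw [Nat.cast_sub hd]; norm_num
      rw [this]; ring
    · rw [indicator_of_notMem (fun hc => h hc.2), hg]
      simp only [if_neg h, smul_zero]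
  rw [h2, setIntegral_indicator measurableSet_Ioc]
  have h3 : Ioi (0:ℝ) ∩ Ioc (0:ℝ) 1 = Ioc (0:ℝ) 1 := by
    ext y; simp only [mem_inter_iff, mem_Ioi, mem_Ioc]; tauto
  rw [h3, ← intervalIntegral.integral_of_le zero_le_one,
    integral_rpow (Or.inl (by linarith : (-1:ℝ) < β + d - 1))]
  have h4 : β + ↑d - 1 + 1 = β + d := by ring
  rw [h4, Real.one_rpow, Real.zero_rpow (by linarith : β + (d:ℝ) ≠ 0)]
  rw [Measure.addHaar_closedBall_eq_addHaar_ball]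
  rw [nsmul_eq_mul, smul_eq_mul]
  rw [measureReal_def]
  ring

end Aux

set_option maxHeartbeats 1000000 in
/-- Asymptotic mean: for a density `f ∈ L²(W)` on `W` with `Vol(W) = 1` and radii `r_n → 0`,
`r_n^{-(β+d)} ∫_{W×W} 1{‖x-y‖≤r_n} ‖x-y‖^β f(x)f(y) d(x,y) → (d κ_d/(β+d)) ∫_W f²`. -/
theorem stmt8 (d : ℕ) (hd : 1 ≤ d) (W : Set (EuclideanSpace ℝ (Fin d))) (hW : MeasurableSet W)
    (hvol : volume W = 1)
    (f : EuclideanSpace ℝ (Fin d) → ℝ) (hf : Measurable f) (hf0 : ∀ x, 0 ≤ f x)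
    (hsupp : ∀ x ∉ W, f x = 0)
    (hf1 : IntegrableOn f W) (hprob : ∫ x in W, f x = 1)
    (hf2 : IntegrableOn (fun x => f x ^ 2) W)
    (β : ℝ) (hβ : -(d:ℝ) < β)
    (r : ℕ → ℝ) (hrpos : ∀ n, 0 < r n) (hr0 : Tendsto r atTop (nhds 0))
    (κ : ℝ) (hκ : κ = (volume (closedBall (0 : EuclideanSpace ℝ (Fin d)) 1)).toReal) :
    Tendsto (fun n =>
        (∫ p in W ×ˢ W,
          if ‖p.1 - p.2‖ ≤ r n then ‖p.1 - p.2‖ ^ β * f p.1 * f p.2 else 0)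
          / r n ^ (β + (d : ℝ)))
      atTop (nhds (((d : ℝ) * κ / (β + (d : ℝ))) * ∫ x in W, f x ^ 2)) := by
  haveI : Fact ((1:ℝ≥0∞) ≤ 2) := ⟨one_le_two⟩
  haveI hnt : Nontrivial (EuclideanSpace ℝ (Fin d)) :=
    Module.nontrivial_of_finrank_pos (R := ℝ)
      (by simp only [finrank_euclideanSpace, Fintype.card_fin]; omega)
  have hβd : 0 < β + (d:ℝ) := by linarith
  -- f is square integrable on the whole space
  have hsq : Integrable (fun x => f x ^ 2) volume := by
    have h := hf2.integrable_indicator hW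
    refine h.congr (Filter.EventuallyEq.of_eq ?_)
    funext x
    by_cases h' : x ∈ W
    · rw [indicator_of_mem h']
    · rw [indicator_of_notMem h', hsupp x h']; ring
  have hm2 : MemLp f 2 volume := (memLp_two_iff_integrable_sq hf.aestronglyMeasurable).2 hsq
  set F : Lp ℝ 2 (volume : Measure (EuclideanSpace ℝ (Fin d))) := hm2.toLp f with hFdef
  set Φ : C(EuclideanSpace ℝ (Fin d) × EuclideanSpace ℝ (Fin d), EuclideanSpace ℝ (Fin d)) :=
    ⟨fun p => p.2 + p.1, continuous_snd.add continuous_fst⟩ with hΦdef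
  set T : EuclideanSpace ℝ (Fin d) → C(EuclideanSpace ℝ (Fin d), EuclideanSpace ℝ (Fin d)) :=
    fun z => ContinuousMap.curry Φ z with hTdef
  have hTmp : ∀ z, MeasurePreserving (T z) volume volume := fun z =>
    measurePreserving_add_right volume z
  set G : EuclideanSpace ℝ (Fin d) → Lp ℝ 2 (volume : Measure (EuclideanSpace ℝ (Fin d))) :=
    fun z => Lp.compMeasurePreserving (T z) (hTmp z) F with hGdef
  have hGcont : Continuous G := by
    have h := Lp.compMeasurePreserving_continuous (volume : Measure (EuclideanSpace ℝ (Fin d)))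
      (volume : Measure (EuclideanSpace ℝ (Fin d))) ℝ (by norm_num : (2:ℝ≥0∞) ≠ ∞)
    have h2 : Continuous fun z : EuclideanSpace ℝ (Fin d) =>
        ((F, ⟨T z, hTmp z⟩) :
          Lp ℝ 2 (volume : Measure (EuclideanSpace ℝ (Fin d))) ×
          {φ : C(EuclideanSpace ℝ (Fin d), EuclideanSpace ℝ (Fin d)) //
            MeasurePreserving φ volume volume}) :=
      continuous_const.prodMk (((ContinuousMap.curry Φ).continuous).subtype_mk _)
    exact h.comp h2
  set A : EuclideanSpace ℝ (Fin d) → ℝ := fun z => inner (𝕜 := ℝ) F (G z) with hAdef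
  have hAcont : Continuous A := continuous_const.inner hGcont
  have hcoeF : (⇑F) =ᵐ[volume] f := hm2.coeFn_toLp
  have hAeq : ∀ z, A z = ∫ x, f x * f (x + z) := by
    intro z
    show (inner (𝕜 := ℝ) F (G z) : ℝ) = _
    rw [L2.inner_def]
    refine integral_congr_ae ?_
    have h2 : (⇑(G z)) =ᵐ[volume] (⇑F) ∘ (T z) := Lp.coeFn_compMeasurePreserving F (hTmp z)
    have h3 : (⇑F) ∘ (T z) =ᵐ[volume] f ∘ (T z) :=
      hcoeF.comp_tendsto (hTmp z).quasiMeasurePreserving.tendsto_ae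
    filter_upwards [hcoeF, h2.trans h3] with x hx1 hx2
    simp only [RCLike.inner_apply, conj_trivial]
    rw [hx1, hx2]
    exact mul_comm _ _
  have hFF : (inner (𝕜 := ℝ) F F : ℝ) = ∫ x, f x * f x := by
    rw [L2.inner_def]
    refine integral_congr_ae ?_
    filter_upwards [hcoeF] with x hx
    simp only [RCLike.inner_apply, conj_trivial]
    rw [hx]
  have hWsq : (∫ x in W, f x ^ 2) = ∫ x, f x * f x := by
    rw [setIntegral_eq_integral_of_forall_compl_eq_zero
      (fun x hx => by rw [hsupp x hx]; ring)]
    congr 1; funext x; ring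
  have hA0 : A 0 = ∫ x in W, f x ^ 2 := by
    rw [hAeq 0, hWsq]
    congr 1; funext x; rw [add_zero]
  have hAbd : ∀ z, |A z| ≤ A 0 := by
    intro z
    have hnorm : ‖G z‖ = ‖F‖ :=
      (Lp.isometry_compMeasurePreserving (hTmp z)).norm_map_of_map_zero (map_zero _) F
    calc |A z| ≤ ‖F‖ * ‖G z‖ := abs_real_inner_le_norm F (G z)
      _ = ‖F‖ * ‖F‖ := by rw [hnorm]
      _ = inner (𝕜 := ℝ) F F := (real_inner_self_eq_norm_mul_norm F).symm
      _ = A 0 := by rw [hFF, hA0, hWsq]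
  -- square-integral as lintegral, finite
  set C : ℝ≥0∞ := ∫⁻ x, (‖f x‖₊ : ℝ≥0∞) ^ (2:ℝ) ∂(volume : Measure (EuclideanSpace ℝ (Fin d))) with hCdef
  have hCfin : C < ∞ := by
    have h2 := hsq.2
    rw [hasFiniteIntegral_def] at h2
    refine lt_of_eq_of_lt ?_ h2
    rw [hCdef]
    congr 1
    funext x
    have hx : ‖f x ^ 2‖₊ = ‖f x‖₊ ^ 2 := by
      ext
      simp [Real.norm_eq_abs, abs_pow, sq_abs]
    rw [enorm_eq_nnnorm, hx, ENNReal.coe_pow, ← ENNReal.rpow_natCast]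
    norm_num
  -- Cauchy-Schwarz bound for the correlation lintegral
  have hCS : ∀ z : EuclideanSpace ℝ (Fin d),
      (∫⁻ x, (‖f x‖₊ : ℝ≥0∞) * (‖f (x + z)‖₊ : ℝ≥0∞)) ≤ C := by
    intro z
    have hconj : (2:ℝ).HolderConjugate 2 := ⟨by norm_num, by norm_num, by norm_num⟩
    have hmf : AEMeasurable (fun x => (‖f x‖₊ : ℝ≥0∞)) (volume : Measure (EuclideanSpace ℝ (Fin d))) :=
      (hf.nnnorm.coe_nnreal_ennreal).aemeasurable
    have hmg : AEMeasurable (fun x : EuclideanSpace ℝ (Fin d) => (‖f (x + z)‖₊ : ℝ≥0∞)) volume :=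
      ((hf.comp (measurable_id.add_const z)).nnnorm.coe_nnreal_ennreal).aemeasurable
    have h := ENNReal.lintegral_mul_le_Lp_mul_Lq
      (volume : Measure (EuclideanSpace ℝ (Fin d))) hconj hmf hmg
    have htrans : (∫⁻ x, (‖f (x + z)‖₊ : ℝ≥0∞) ^ (2:ℝ)) = C := by
      rw [hCdef]
      exact lintegral_add_right_eq_self (fun x => (‖f x‖₊ : ℝ≥0∞) ^ (2:ℝ)) z
    calc (∫⁻ x, (‖f x‖₊ : ℝ≥0∞) * (‖f (x + z)‖₊ : ℝ≥0∞))
        ≤ (∫⁻ x, (‖f x‖₊ : ℝ≥0∞) ^ (2:ℝ)) ^ (1/2:ℝ) *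
          (∫⁻ x, (‖f (x + z)‖₊ : ℝ≥0∞) ^ (2:ℝ)) ^ (1/2:ℝ) := h
      _ = C ^ (1/2:ℝ) * C ^ (1/2:ℝ) := by rw [htrans, hCdef]
      _ = C := by
          rw [← ENNReal.rpow_add_of_nonneg (1/2) (1/2) (by norm_num) (by norm_num)]
          norm_num
  -- the key identity
  have key : ∀ R : ℝ, 0 < R →
      (∫ p in W ×ˢ W, if ‖p.1 - p.2‖ ≤ R then ‖p.1 - p.2‖ ^ β * f p.1 * f p.2 else 0)
        = ∫ z in closedBall (0 : EuclideanSpace ℝ (Fin d)) R, ‖z‖ ^ β * A z := by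
    intro R hR
    set H : EuclideanSpace ℝ (Fin d) → ℝ := fun z => if ‖z‖ ≤ R then ‖z‖ ^ β else 0 with hHdef
    have hnormset : MeasurableSet {z : EuclideanSpace ℝ (Fin d) | ‖z‖ ≤ R} :=
      measurableSet_le measurable_norm measurable_const
    have hHmeas : Measurable H := Measurable.ite hnormset (aux_meas d β) measurable_const
    have hHind : H = (closedBall (0 : EuclideanSpace ℝ (Fin d)) R).indicator
        (fun z => ‖z‖ ^ β) := by
      funext z
      by_cases h : ‖z‖ ≤ R
      · rw [hHdef]
        simp only [if_pos h]
        rw [indicator_of_mem (mem_closedBall_zero_iff.2 h)]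
      · rw [hHdef]
        simp only [if_neg h]
        rw [indicator_of_notMem (fun hc => h (mem_closedBall_zero_iff.1 hc))]
    have hHint : Integrable H volume := by
      rw [hHind]
      exact (aux_intOn d hd β hβ R hR).integrable_indicator measurableSet_closedBall
    have hHnn : ∀ z, 0 ≤ H z := by
      intro z
      simp only [hHdef]
      split_ifs
      · exact Real.rpow_nonneg (norm_nonneg _) _
      · exact le_refl _
    -- extend the integral to the whole product space
    have e1 : (∫ p in W ×ˢ W, if ‖p.1 - p.2‖ ≤ R then ‖p.1 - p.2‖ ^ β * f p.1 * f p.2 else 0)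
        = ∫ p : EuclideanSpace ℝ (Fin d) × EuclideanSpace ℝ (Fin d),
            (if ‖p.1 - p.2‖ ≤ R then ‖p.1 - p.2‖ ^ β * f p.1 * f p.2 else 0) := by
      refine setIntegral_eq_integral_of_forall_compl_eq_zero (fun p hp => ?_)
      rw [mem_prod] at hp
      push_neg at hp
      have hzero : f p.1 * f p.2 = 0 := by
        by_cases h1 : p.1 ∈ W
        · rw [hsupp p.2 (hp h1), mul_zero]
        · rw [hsupp p.1 h1, zero_mul]
      split_ifs
      · rw [mul_assoc, hzero, mul_zero]
      · rfl
    -- change of variables (x, y) = (x, x + z)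
    have hψ := measurePreserving_prod_add
      (volume : Measure (EuclideanSpace ℝ (Fin d))) volume
    have hGm : Measurable fun p : EuclideanSpace ℝ (Fin d) × EuclideanSpace ℝ (Fin d) =>
        (if ‖p.1 - p.2‖ ≤ R then ‖p.1 - p.2‖ ^ β * f p.1 * f p.2 else 0) := by
      refine Measurable.ite ?_ ?_ measurable_const
      · exact measurableSet_le (measurable_fst.sub measurable_snd).norm measurable_const
      · exact (((measurable_fst.sub measurable_snd).norm.pow measurable_const).mul
          (hf.comp measurable_fst)).mul (hf.comp measurable_snd)
    have e2 : (∫ p : EuclideanSpace ℝ (Fin d) × EuclideanSpace ℝ (Fin d),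
            (if ‖p.1 - p.2‖ ≤ R then ‖p.1 - p.2‖ ^ β * f p.1 * f p.2 else 0))
        = ∫ q : EuclideanSpace ℝ (Fin d) × EuclideanSpace ℝ (Fin d),
            H q.2 * (f q.1 * f (q.1 + q.2)) := by
      have step : (∫ p : EuclideanSpace ℝ (Fin d) × EuclideanSpace ℝ (Fin d),
            (if ‖p.1 - p.2‖ ≤ R then ‖p.1 - p.2‖ ^ β * f p.1 * f p.2 else 0))
          = ∫ q : EuclideanSpace ℝ (Fin d) × EuclideanSpace ℝ (Fin d),
            (if ‖(q.1, q.1 + q.2).1 - (q.1, q.1 + q.2).2‖ ≤ R then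
              ‖(q.1, q.1 + q.2).1 - (q.1, q.1 + q.2).2‖ ^ β *
                f (q.1, q.1 + q.2).1 * f (q.1, q.1 + q.2).2 else 0) := by
        rw [Measure.volume_eq_prod]
        conv_lhs => rw [← hψ.map_eq]
        rw [integral_map hψ.measurable.aemeasurable]
        rw [hψ.map_eq]
        exact hGm.aestronglyMeasurable
      rw [step]
      congr 1
      funext q
      have hnq : ‖q.1 - (q.1 + q.2)‖ = ‖q.2‖ := by
        rw [sub_add_cancel_left, norm_neg]
      simp only [hnq]
      rw [hHdef]
      by_cases h : ‖q.2‖ ≤ R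
      · simp only [if_pos h]; ring
      · simp only [if_neg h, zero_mul]
    -- integrability on the product space
    have hhm : Measurable fun q : EuclideanSpace ℝ (Fin d) × EuclideanSpace ℝ (Fin d) =>
        H q.2 * (f q.1 * f (q.1 + q.2)) :=
      (hHmeas.comp measurable_snd).mul
        ((hf.comp measurable_fst).mul (hf.comp (measurable_fst.add measurable_snd)))
    have hint : Integrable (fun q : EuclideanSpace ℝ (Fin d) × EuclideanSpace ℝ (Fin d) =>
        H q.2 * (f q.1 * f (q.1 + q.2))) (volume.prod volume) := by
      refine ⟨hhm.aestronglyMeasurable, ?_⟩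
      rw [hasFiniteIntegral_def]
      simp only [enorm_eq_nnnorm]
      have hnnm : AEMeasurable (fun q : EuclideanSpace ℝ (Fin d) × EuclideanSpace ℝ (Fin d) =>
          (‖H q.2 * (f q.1 * f (q.1 + q.2))‖₊ : ℝ≥0∞)) (volume.prod volume) :=
        (hhm.nnnorm.coe_nnreal_ennreal).aemeasurable
      rw [lintegral_prod_symm _ hnnm]
      have hinner : ∀ z : EuclideanSpace ℝ (Fin d),
          (∫⁻ x, (‖H z * (f x * f (x + z))‖₊ : ℝ≥0∞)) ≤ (‖H z‖₊ : ℝ≥0∞) * C := by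
        intro z
        have heq : ∀ x : EuclideanSpace ℝ (Fin d),
            (‖H z * (f x * f (x + z))‖₊ : ℝ≥0∞)
              = (‖H z‖₊ : ℝ≥0∞) * ((‖f x‖₊ : ℝ≥0∞) * (‖f (x + z)‖₊ : ℝ≥0∞)) := by
          intro x
          rw [nnnorm_mul, nnnorm_mul]
          push_cast
          ring
        calc (∫⁻ x, (‖H z * (f x * f (x + z))‖₊ : ℝ≥0∞))
            = ∫⁻ x, (‖H z‖₊ : ℝ≥0∞) * ((‖f x‖₊ : ℝ≥0∞) * (‖f (x + z)‖₊ : ℝ≥0∞)) := by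
              congr 1; funext x; exact heq x
          _ = (‖H z‖₊ : ℝ≥0∞) * ∫⁻ x, (‖f x‖₊ : ℝ≥0∞) * (‖f (x + z)‖₊ : ℝ≥0∞) :=
              lintegral_const_mul' _ _ ENNReal.coe_ne_top
          _ ≤ (‖H z‖₊ : ℝ≥0∞) * C := mul_le_mul_right (hCS z) _
      calc (∫⁻ z, ∫⁻ x, (‖H z * (f x * f (x + z))‖₊ : ℝ≥0∞))
          ≤ ∫⁻ z, (‖H z‖₊ : ℝ≥0∞) * C := lintegral_mono hinner
        _ = (∫⁻ z, (‖H z‖₊ : ℝ≥0∞)) * C := lintegral_mul_const' _ _ hCfin.ne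
        _ < ∞ := by
            have hH2 := hHint.2
            rw [hasFiniteIntegral_def] at hH2
            exact ENNReal.mul_lt_top hH2 hCfin
    -- Fubini
    have e3 : (∫ q : EuclideanSpace ℝ (Fin d) × EuclideanSpace ℝ (Fin d),
            H q.2 * (f q.1 * f (q.1 + q.2)))
        = ∫ z, H z * A z := by
      rw [Measure.volume_eq_prod, integral_prod_symm _ hint]
      congr 1
      funext z
      show (∫ x, H z * (f x * f (x + z))) = H z * A z
      rw [hAeq z, integral_const_mul]
    -- to the ball
    have e4 : (∫ z, H z * A z)
        = ∫ z in closedBall (0 : EuclideanSpace ℝ (Fin d)) R, ‖z‖ ^ β * A z := by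
      rw [← integral_indicator measurableSet_closedBall]
      congr 1
      funext z
      by_cases h : ‖z‖ ≤ R
      · rw [indicator_of_mem (mem_closedBall_zero_iff.2 h), hHdef]
        simp only [if_pos h]
      · rw [indicator_of_notMem (fun hc => h (mem_closedBall_zero_iff.1 hc)), hHdef]
        simp only [if_neg h, zero_mul]
    rw [e1, e2, e3, e4]
  -- scaling
  have hfr : Module.finrank ℝ (EuclideanSpace ℝ (Fin d)) = d := by
    simp [finrank_euclideanSpace]
  have h2ball : ∀ R : ℝ, 0 < R → R • closedBall (0 : EuclideanSpace ℝ (Fin d)) 1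
      = closedBall (0 : EuclideanSpace ℝ (Fin d)) R := by
    intro R hR
    rw [_root_.smul_closedBall _ _ zero_le_one, smul_zero, Real.norm_eq_abs,
      abs_of_pos hR, mul_one]
  have scale : ∀ R : ℝ, 0 < R →
      (∫ z in closedBall (0 : EuclideanSpace ℝ (Fin d)) R, ‖z‖ ^ β * A z)
        = R ^ (β + (d:ℝ)) * ∫ u in closedBall (0 : EuclideanSpace ℝ (Fin d)) 1,
            ‖u‖ ^ β * A (R • u) := by
    intro R hR
    have h1 : (∫ u in closedBall (0 : EuclideanSpace ℝ (Fin d)) 1,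
          ‖R • u‖ ^ β * A (R • u))
        = (R ^ d)⁻¹ • ∫ z in closedBall (0 : EuclideanSpace ℝ (Fin d)) R, ‖z‖ ^ β * A z := by
      have h := Measure.setIntegral_comp_smul_of_pos
        (volume : Measure (EuclideanSpace ℝ (Fin d)))
        (fun z : EuclideanSpace ℝ (Fin d) => ‖z‖ ^ β * A z)
        (closedBall (0 : EuclideanSpace ℝ (Fin d)) 1) hR
      rw [h2ball R hR, hfr] at h
      exact h
    have h3 : (∫ u in closedBall (0 : EuclideanSpace ℝ (Fin d)) 1,
        ‖R • u‖ ^ β * A (R • u))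
        = R ^ β * ∫ u in closedBall (0 : EuclideanSpace ℝ (Fin d)) 1,
            ‖u‖ ^ β * A (R • u) := by
      rw [← integral_const_mul]
      refine setIntegral_congr_fun measurableSet_closedBall (fun u _ => ?_)
      rw [norm_smul, Real.norm_eq_abs, abs_of_pos hR, Real.mul_rpow hR.le (norm_nonneg _)]
      ring
    rw [h3] at h1
    have hRd : (0:ℝ) < R ^ d := pow_pos hR d
    have hRβ : (0:ℝ) < R ^ β := Real.rpow_pos_of_pos hR β
    rw [Real.rpow_add hR, Real.rpow_natCast]
    rw [smul_eq_mul] at h1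
    field_simp at h1 ⊢
    linarith [h1]
  -- dominated convergence
  have hDCT : Tendsto (fun n => ∫ u in closedBall (0 : EuclideanSpace ℝ (Fin d)) 1,
      ‖u‖ ^ β * A (r n • u)) atTop
      (𝓝 (∫ u in closedBall (0 : EuclideanSpace ℝ (Fin d)) 1, ‖u‖ ^ β * A 0)) := by
    refine tendsto_integral_of_dominated_convergence
      (fun u => ‖u‖ ^ β * A 0) ?_ ?_ ?_ ?_
    · intro n
      exact ((aux_meas d β).aestronglyMeasurable).mul
        ((hAcont.comp (continuous_const_smul (r n))).measurable.aestronglyMeasurable)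
    · exact (aux_intOn d hd β hβ 1 one_pos).mul_const (A 0)
    · intro n
      refine Eventually.of_forall (fun u => ?_)
      rw [norm_mul, Real.norm_eq_abs, Real.norm_eq_abs,
        abs_of_nonneg (Real.rpow_nonneg (norm_nonneg _) _)]
      exact mul_le_mul_of_nonneg_left (hAbd _) (Real.rpow_nonneg (norm_nonneg _) _)
    · refine Eventually.of_forall (fun u => ?_)
      have h1 : Tendsto (fun n => r n • u) atTop (𝓝 (0 : EuclideanSpace ℝ (Fin d))) := by
        have := hr0.smul_const u
        rwa [zero_smul] at this
      exact tendsto_const_nhds.mul ((hAcont.tendsto 0).comp h1)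
  -- identify the limit
  have hlimeq : (∫ u in closedBall (0 : EuclideanSpace ℝ (Fin d)) 1, ‖u‖ ^ β * A 0)
      = ((d : ℝ) * κ / (β + (d : ℝ))) * ∫ x in W, f x ^ 2 := by
    rw [integral_mul_const, aux_val d hd β hβ, hA0, ← hκ]
  rw [← hlimeq]
  refine Tendsto.congr (fun n => ?_) hDCT
  rw [key (r n) (hrpos n), scale (r n) (hrpos n),
    mul_div_cancel_left₀ _ (Real.rpow_pos_of_pos (hrpos n) _).ne']
end

section
/- Let W ⊂ ℝ^d be measurable, β > -d/2, r > 0, and f : W → [0,∞) measurable. Then ∫_W (∫_W 1{‖x-y‖ ≤ r} ‖x-y‖^β f(y) dy)^2 f(x) dx ≤ (d·κ_d/(β+d))^2 · r^{2β+2d} · ∫_W f(x)^3 dx. -/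
open MeasureTheory Filter Metric Set
open scoped ENNReal NNReal

section polar
variable {d : ℕ}

lemma polar_lintegral [Nontrivial (EuclideanSpace ℝ (Fin d))] (h : ℝ → ℝ≥0∞) (hh : Measurable h) :
    ∫⁻ x : EuclideanSpace ℝ (Fin d), h ‖x‖
      = (volume : Measure (EuclideanSpace ℝ (Fin d))).toSphere univ
          * ∫⁻ y in Ioi (0 : ℝ), ENNReal.ofReal (y ^ (d - 1)) * h y := by
  set E := EuclideanSpace ℝ (Fin d)
  have hdim : Module.finrank ℝ E = d := finrank_euclideanSpace_fin
  have hmeas2 : Measurable fun p : sphere (0:E) 1 × Ioi (0:ℝ) => h p.2.1 :=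
    hh.comp (measurable_subtype_coe.comp measurable_snd)
  calc ∫⁻ x : E, h ‖x‖
      = ∫⁻ x in ({0}ᶜ : Set E), h ‖x‖ := by
        rw [restrict_compl_singleton]
    _ = ∫⁻ x : ({0}ᶜ : Set E), h ‖x.1‖ ∂((volume : Measure E).comap Subtype.val) :=
        (lintegral_subtype_comap (measurableSet_singleton 0).compl _).symm
    _ = ∫⁻ p : sphere (0:E) 1 × Ioi (0:ℝ), h p.2.1
          ∂((volume : Measure E).toSphere.prod
            (Measure.volumeIoiPow (Module.finrank ℝ E - 1))) := by
        have key := (Measure.measurePreserving_homeomorphUnitSphereProd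
          (volume : Measure E)).lintegral_comp hmeas2
        rw [← key]
        exact lintegral_congr fun x => by simp
    _ = (volume : Measure E).toSphere univ
          * ∫⁻ y : Ioi (0:ℝ), h y.1 ∂(Measure.volumeIoiPow (Module.finrank ℝ E - 1)) := by
        rw [lintegral_prod _ hmeas2.aemeasurable]
        simp [lintegral_const, mul_comm]
    _ = _ := by
        have hg : Measurable fun y : Ioi (0:ℝ) => h y.1 := hh.comp measurable_subtype_coe
        rw [hdim, Measure.volumeIoiPow,
          lintegral_withDensity_eq_lintegral_mul _
            ((measurable_subtype_coe.pow_const _).ennreal_ofReal) hg]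
        simp only [Pi.mul_apply]
        rw [lintegral_subtype_comap measurableSet_Ioi
          (fun y : ℝ => ENNReal.ofReal (y ^ (d - 1)) * h y)]

lemma ball_lintegral (hd : 1 ≤ d) {β r : ℝ} (hβd : 0 < β + d) (hr : 0 < r) :
    ∫⁻ y : EuclideanSpace ℝ (Fin d), ENNReal.ofReal (if ‖y‖ ≤ r then ‖y‖ ^ β else 0)
      = ENNReal.ofReal
          (((d : ℝ) * (volume (closedBall (0 : EuclideanSpace ℝ (Fin d)) 1)).toReal / (β + d))
            * r ^ (β + d)) := by
  set E := EuclideanSpace ℝ (Fin d)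
  haveI : Nontrivial E := Module.nontrivial_of_finrank_pos
    (R := ℝ) (by rw [finrank_euclideanSpace_fin]; omega)
  have hmeas : Measurable fun t : ℝ => ENNReal.ofReal (if t ≤ r then t ^ β else 0) :=
    (Measurable.ite measurableSet_Iic (measurable_id.pow_const β)
      measurable_const).ennreal_ofReal
  rw [polar_lintegral _ hmeas]
  have hcongr : ∀ y ∈ Ioi (0:ℝ),
      ENNReal.ofReal (y ^ (d - 1)) * ENNReal.ofReal (if y ≤ r then y ^ β else 0)
        = (Iic r).indicator (fun y => ENNReal.ofReal (y ^ (β + (d:ℝ) - 1))) y := by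
    intro y hy
    have hy' : (0:ℝ) < y := hy
    by_cases hyr : y ≤ r
    · simp only [hyr, if_pos, indicator_apply, mem_Iic, if_true]
      rw [← ENNReal.ofReal_mul (by positivity)]
      congr 1
      rw [← Real.rpow_natCast y (d - 1), ← Real.rpow_add hy']
      congr 1
      rw [Nat.cast_sub hd]
      push_cast
      ring
    · simp [hyr, indicator_apply]
  rw [setLIntegral_congr_fun measurableSet_Ioi hcongr]
  rw [lintegral_indicator measurableSet_Iic, Measure.restrict_restrict measurableSet_Iic,
    Set.inter_comm, Set.Ioi_inter_Iic]
  have hint : IntegrableOn (fun y : ℝ => y ^ (β + (d:ℝ) - 1)) (Ioc 0 r) :=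
    (intervalIntegral.intervalIntegrable_rpow' (by linarith)).1
  rw [← ofReal_integral_eq_lintegral_ofReal hint ?nonneg]
  case nonneg =>
    filter_upwards [ae_restrict_mem measurableSet_Ioc] with y hy
    exact Real.rpow_nonneg hy.1.le _
  have hval : ∫ y in Ioc 0 r, y ^ (β + (d:ℝ) - 1) = r ^ (β + d) / (β + d) := by
    rw [← intervalIntegral.integral_of_le hr.le,
      integral_rpow (Or.inl (by linarith))]
    rw [Real.zero_rpow (by linarith : β + (d:ℝ) - 1 + 1 ≠ 0)]
    ring_nf
  rw [hval]
  rw [Measure.toSphere_apply_univ, finrank_euclideanSpace_fin,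
    ← Measure.addHaar_closedBall_eq_addHaar_ball]
  rw [← ENNReal.ofReal_toReal (measure_closedBall_lt_top (x := (0:E)) (r := 1)).ne]
  rw [← ENNReal.ofReal_natCast d, ← ENNReal.ofReal_mul (by positivity),
    ← ENNReal.ofReal_mul (by positivity)]
  congr 1
  field_simp
  rw [ENNReal.toReal_ofReal ENNReal.toReal_nonneg]

end polar

set_option maxHeartbeats 2000000 in
/-- For measurable `f ≥ 0` on `W`, `β > -d/2`, `r > 0`:
`∫_W (∫_W 1{‖x-y‖≤r}‖x-y‖^β f(y) dy)² f(x) dx ≤ (d κ_d/(β+d))² r^{2β+2d} ∫_W f³`. -/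
theorem stmt9 (d : ℕ) (hd : 1 ≤ d) (W : Set (EuclideanSpace ℝ (Fin d))) (hW : MeasurableSet W)
    (β : ℝ) (hβ : -(d:ℝ)/2 < β) (r : ℝ) (hr : 0 < r)
    (f : EuclideanSpace ℝ (Fin d) → ℝ) (hf : Measurable f) (hf0 : ∀ x, 0 ≤ f x)
    (κ : ℝ) (hκ : κ = (volume (closedBall (0 : EuclideanSpace ℝ (Fin d)) 1)).toReal) :
    ∫⁻ x in W,
        (∫⁻ y in W,
          ENNReal.ofReal (if ‖x - y‖ ≤ r then ‖x - y‖ ^ β * f y else 0)) ^ 2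
          * ENNReal.ofReal (f x)
      ≤ ENNReal.ofReal (((d : ℝ) * κ / (β + (d : ℝ))) ^ 2 * r ^ (2 * β + 2 * (d : ℝ)))
        * ∫⁻ x in W, ENNReal.ofReal (f x ^ 3) := by
  classical
  have hd1 : (1:ℝ) ≤ (d:ℝ) := by exact_mod_cast hd
  have hβd : 0 < β + (d:ℝ) := by linarith
  haveI : Nontrivial (EuclideanSpace ℝ (Fin d)) := Module.nontrivial_of_finrank_pos
    (R := ℝ) (by rw [finrank_euclideanSpace_fin]; omega)
  set k : (EuclideanSpace ℝ (Fin d)) → (EuclideanSpace ℝ (Fin d)) → ℝ≥0∞ :=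
    fun x y => ENNReal.ofReal (if ‖x - y‖ ≤ r then ‖x - y‖ ^ β else 0) with hk_def
  have hK : Measurable fun p : (EuclideanSpace ℝ (Fin d)) × (EuclideanSpace ℝ (Fin d)) => k p.1 p.2 := by
    apply Measurable.ennreal_ofReal
    exact Measurable.ite
      (measurableSet_le (measurable_fst.sub measurable_snd).norm measurable_const)
      ((measurable_fst.sub measurable_snd).norm.pow_const β) measurable_const
  have hkx : ∀ x, Measurable (k x) := by
    intro x
    simp only [hk_def]
    exact Measurable.ennreal_ofReal (Measurable.ite
      (measurableSet_le (measurable_const.sub measurable_id).norm measurable_const)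
      ((measurable_const.sub measurable_id).norm.pow_const β) measurable_const)
  have hG : Measurable fun x : (EuclideanSpace ℝ (Fin d)) => ENNReal.ofReal (f x) := hf.ennreal_ofReal
  have hH : Measurable fun x : (EuclideanSpace ℝ (Fin d)) => ENNReal.ofReal (f x ^ 3) := (hf.pow_const 3).ennreal_ofReal
  have hκ0 : 0 ≤ κ := hκ ▸ ENNReal.toReal_nonneg
  set C : ℝ≥0∞ := ENNReal.ofReal ((d:ℝ) * κ / (β + (d:ℝ)) * r ^ (β + (d:ℝ))) with hC_def
  have hCne : C ≠ ⊤ := ENNReal.ofReal_ne_top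
  -- total mass of the kernel
  have hball : ∀ x : (EuclideanSpace ℝ (Fin d)), ∫⁻ y, k x y = C := by
    intro x
    have hmg : Measurable fun y : (EuclideanSpace ℝ (Fin d)) => ENNReal.ofReal (if ‖y‖ ≤ r then ‖y‖ ^ β else 0) :=
      (Measurable.ite (measurableSet_le measurable_norm measurable_const)
        (measurable_norm.pow_const β) measurable_const).ennreal_ofReal
    have hmp := (Measure.measurePreserving_sub_left (volume : Measure (EuclideanSpace ℝ (Fin d))) x).lintegral_comp hmg
    calc ∫⁻ y, k x y
        = ∫⁻ y : (EuclideanSpace ℝ (Fin d)), ENNReal.ofReal (if ‖y‖ ≤ r then ‖y‖ ^ β else 0) := hmp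
      _ = C := by rw [ball_lintegral hd hβd hr, hC_def, hκ]
  have hkW : ∀ x, ∫⁻ y in W, k x y ≤ C :=
    fun x => (setLIntegral_le_lintegral _ _).trans (hball x).le
  have hksymm : ∀ x y, k x y = k y x := by
    intro x y; simp only [hk_def]; rw [norm_sub_rev]
  have hkWy : ∀ y, ∫⁻ x in W, k x y ≤ C := by
    intro y
    calc ∫⁻ x in W, k x y = ∫⁻ x in W, k y x := lintegral_congr fun x => hksymm x y
      _ ≤ C := hkW y
  -- swap bound
  have hDouble : ∫⁻ x in W, ∫⁻ z in W, k x z * ENNReal.ofReal (f z ^ 3)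
      ≤ (∫⁻ x in W, ENNReal.ofReal (f x ^ 3)) * C := by
    rw [lintegral_lintegral_swap ((hK.mul (hH.comp measurable_snd)).aemeasurable)]
    calc ∫⁻ z in W, ∫⁻ x in W, k x z * ENNReal.ofReal (f z ^ 3)
        = ∫⁻ z in W, (∫⁻ x in W, k x z) * ENNReal.ofReal (f z ^ 3) :=
          lintegral_congr fun z => lintegral_mul_const' _ _ ENNReal.ofReal_ne_top
      _ ≤ ∫⁻ z in W, C * ENNReal.ofReal (f z ^ 3) :=
          lintegral_mono fun z => mul_le_mul_left (hkWy z) _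
      _ = C * ∫⁻ z in W, ENNReal.ofReal (f z ^ 3) := lintegral_const_mul' _ _ hCne
      _ = _ := mul_comm _ _
  -- AM-GM
  have amgmE : ∀ x y z : (EuclideanSpace ℝ (Fin d)),
      ENNReal.ofReal (f x) * ENNReal.ofReal (f y) * ENNReal.ofReal (f z)
        ≤ (ENNReal.ofReal (f x ^ 3) + ENNReal.ofReal (f y ^ 3) + ENNReal.ofReal (f z ^ 3))
            * (3:ℝ≥0∞)⁻¹ := by
    intro x y z
    have h3 : ENNReal.ofReal ((3:ℝ)⁻¹) = (3:ℝ≥0∞)⁻¹ := by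
      rw [ENNReal.ofReal_inv_of_pos (by norm_num)]
      norm_num
    rw [← ENNReal.ofReal_mul (hf0 x), ← ENNReal.ofReal_mul (mul_nonneg (hf0 x) (hf0 y)),
      ← ENNReal.ofReal_add (pow_nonneg (hf0 x) 3) (pow_nonneg (hf0 y) 3),
      ← ENNReal.ofReal_add (add_nonneg (pow_nonneg (hf0 x) 3) (pow_nonneg (hf0 y) 3))
        (pow_nonneg (hf0 z) 3),
      ← h3, ← ENNReal.ofReal_mul (add_nonneg (add_nonneg (pow_nonneg (hf0 x) 3)
        (pow_nonneg (hf0 y) 3)) (pow_nonneg (hf0 z) 3))]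
    refine ENNReal.ofReal_le_ofReal ?_
    nlinarith [mul_nonneg (add_nonneg (add_nonneg (hf0 x) (hf0 y)) (hf0 z))
      (by nlinarith [sq_nonneg (f x - f y), sq_nonneg (f y - f z), sq_nonneg (f x - f z)] :
        (0:ℝ) ≤ f x ^ 2 + f y ^ 2 + f z ^ 2 - f x * f y - f y * f z - f x * f z),
      hf0 x, hf0 y, hf0 z]
  have h3inv : ((3:ℝ≥0∞))⁻¹ ≠ ⊤ := by simp
  -- measurability helper for triple integrals
  have measT : ∀ (F : ((EuclideanSpace ℝ (Fin d)) × (EuclideanSpace ℝ (Fin d))) × (EuclideanSpace ℝ (Fin d)) → ℝ≥0∞), Measurable F →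
      Measurable fun x => ∫⁻ y in W, ∫⁻ z in W, F ((x, y), z) :=
    fun F hF => (Measurable.lintegral_prod_right' hF).lintegral_prod_right'
  -- the three triple-integral bounds
  have hI1 : (∫⁻ x in W, ∫⁻ y in W, ∫⁻ z in W,
        k x y * k x z * ENNReal.ofReal (f x ^ 3))
      ≤ (∫⁻ x in W, ENNReal.ofReal (f x ^ 3)) * (C * C) := by
    have hpt : ∀ x : (EuclideanSpace ℝ (Fin d)), (∫⁻ y in W, ∫⁻ z in W, k x y * k x z * ENNReal.ofReal (f x ^ 3))
        ≤ ENNReal.ofReal (f x ^ 3) * (C * C) := by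
      intro x
      calc ∫⁻ y in W, ∫⁻ z in W, k x y * k x z * ENNReal.ofReal (f x ^ 3)
          = ∫⁻ y in W, ∫⁻ z in W, (k x y * ENNReal.ofReal (f x ^ 3)) * k x z :=
            lintegral_congr fun y => lintegral_congr fun z => by ring
        _ = (∫⁻ y in W, k x y * ENNReal.ofReal (f x ^ 3)) * ∫⁻ z in W, k x z :=
            lintegral_lintegral_mul ((hkx x).mul measurable_const).aemeasurable
              (hkx x).aemeasurable
        _ = ((∫⁻ y in W, k x y) * ENNReal.ofReal (f x ^ 3)) * ∫⁻ z in W, k x z := by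
            rw [lintegral_mul_const' _ _ ENNReal.ofReal_ne_top]
        _ ≤ (C * ENNReal.ofReal (f x ^ 3)) * C :=
            mul_le_mul' (mul_le_mul_left (hkW x) _) (hkW x)
        _ = ENNReal.ofReal (f x ^ 3) * (C * C) := by ring
    calc (∫⁻ x in W, ∫⁻ y in W, ∫⁻ z in W, k x y * k x z * ENNReal.ofReal (f x ^ 3))
        ≤ ∫⁻ x in W, ENNReal.ofReal (f x ^ 3) * (C * C) := lintegral_mono hpt
      _ = (∫⁻ x in W, ENNReal.ofReal (f x ^ 3)) * (C * C) :=
          lintegral_mul_const' _ _ (ENNReal.mul_ne_top hCne hCne)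
  have hI2 : (∫⁻ x in W, ∫⁻ y in W, ∫⁻ z in W,
        k x y * k x z * ENNReal.ofReal (f y ^ 3))
      ≤ (∫⁻ x in W, ENNReal.ofReal (f x ^ 3)) * (C * C) := by
    have hpt : ∀ x : (EuclideanSpace ℝ (Fin d)), (∫⁻ y in W, ∫⁻ z in W, k x y * k x z * ENNReal.ofReal (f y ^ 3))
        ≤ (∫⁻ y in W, k x y * ENNReal.ofReal (f y ^ 3)) * C := by
      intro x
      calc ∫⁻ y in W, ∫⁻ z in W, k x y * k x z * ENNReal.ofReal (f y ^ 3)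
          = ∫⁻ y in W, ∫⁻ z in W, (k x y * ENNReal.ofReal (f y ^ 3)) * k x z :=
            lintegral_congr fun y => lintegral_congr fun z => by ring
        _ = (∫⁻ y in W, k x y * ENNReal.ofReal (f y ^ 3)) * ∫⁻ z in W, k x z :=
            lintegral_lintegral_mul ((hkx x).mul hH).aemeasurable (hkx x).aemeasurable
        _ ≤ (∫⁻ y in W, k x y * ENNReal.ofReal (f y ^ 3)) * C :=
            mul_le_mul_right (hkW x) _
    calc (∫⁻ x in W, ∫⁻ y in W, ∫⁻ z in W, k x y * k x z * ENNReal.ofReal (f y ^ 3))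
        ≤ ∫⁻ x in W, (∫⁻ y in W, k x y * ENNReal.ofReal (f y ^ 3)) * C := lintegral_mono hpt
      _ = (∫⁻ x in W, ∫⁻ y in W, k x y * ENNReal.ofReal (f y ^ 3)) * C :=
          lintegral_mul_const' _ _ hCne
      _ ≤ ((∫⁻ x in W, ENNReal.ofReal (f x ^ 3)) * C) * C :=
          mul_le_mul_left hDouble _
      _ = (∫⁻ x in W, ENNReal.ofReal (f x ^ 3)) * (C * C) := by ring
  have hI3 : (∫⁻ x in W, ∫⁻ y in W, ∫⁻ z in W,
        k x y * k x z * ENNReal.ofReal (f z ^ 3))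
      ≤ (∫⁻ x in W, ENNReal.ofReal (f x ^ 3)) * (C * C) := by
    have hpt : ∀ x : (EuclideanSpace ℝ (Fin d)), (∫⁻ y in W, ∫⁻ z in W, k x y * k x z * ENNReal.ofReal (f z ^ 3))
        ≤ C * ∫⁻ z in W, k x z * ENNReal.ofReal (f z ^ 3) := by
      intro x
      calc ∫⁻ y in W, ∫⁻ z in W, k x y * k x z * ENNReal.ofReal (f z ^ 3)
          = ∫⁻ y in W, ∫⁻ z in W, k x y * (k x z * ENNReal.ofReal (f z ^ 3)) :=
            lintegral_congr fun y => lintegral_congr fun z => by ring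
        _ = (∫⁻ y in W, k x y) * ∫⁻ z in W, k x z * ENNReal.ofReal (f z ^ 3) :=
            lintegral_lintegral_mul (hkx x).aemeasurable ((hkx x).mul hH).aemeasurable
        _ ≤ C * ∫⁻ z in W, k x z * ENNReal.ofReal (f z ^ 3) :=
            mul_le_mul_left (hkW x) _
    calc (∫⁻ x in W, ∫⁻ y in W, ∫⁻ z in W, k x y * k x z * ENNReal.ofReal (f z ^ 3))
        ≤ ∫⁻ x in W, C * ∫⁻ z in W, k x z * ENNReal.ofReal (f z ^ 3) := lintegral_mono hpt
      _ = C * ∫⁻ x in W, ∫⁻ z in W, k x z * ENNReal.ofReal (f z ^ 3) :=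
          lintegral_const_mul' _ _ hCne
      _ ≤ C * ((∫⁻ x in W, ENNReal.ofReal (f x ^ 3)) * C) :=
          mul_le_mul_right hDouble _
      _ = (∫⁻ x in W, ENNReal.ofReal (f x ^ 3)) * (C * C) := by ring
  -- splitting the sum
  have hsplit : (∫⁻ x in W, ∫⁻ y in W, ∫⁻ z in W, k x y * k x z *
        (ENNReal.ofReal (f x ^ 3) + ENNReal.ofReal (f y ^ 3) + ENNReal.ofReal (f z ^ 3)))
      = (∫⁻ x in W, ∫⁻ y in W, ∫⁻ z in W, k x y * k x z * ENNReal.ofReal (f x ^ 3))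
        + (∫⁻ x in W, ∫⁻ y in W, ∫⁻ z in W, k x y * k x z * ENNReal.ofReal (f y ^ 3))
        + (∫⁻ x in W, ∫⁻ y in W, ∫⁻ z in W, k x y * k x z * ENNReal.ofReal (f z ^ 3)) := by
    have hz : ∀ (x y : (EuclideanSpace ℝ (Fin d))), (∫⁻ z in W, k x y * k x z *
          (ENNReal.ofReal (f x ^ 3) + ENNReal.ofReal (f y ^ 3) + ENNReal.ofReal (f z ^ 3)))
        = (∫⁻ z in W, k x y * k x z * ENNReal.ofReal (f x ^ 3))
          + (∫⁻ z in W, k x y * k x z * ENNReal.ofReal (f y ^ 3))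
          + (∫⁻ z in W, k x y * k x z * ENNReal.ofReal (f z ^ 3)) := by
      intro x y
      have e : ∀ z : (EuclideanSpace ℝ (Fin d)), k x y * k x z *
            (ENNReal.ofReal (f x ^ 3) + ENNReal.ofReal (f y ^ 3) + ENNReal.ofReal (f z ^ 3))
          = (k x y * k x z * ENNReal.ofReal (f x ^ 3)
              + k x y * k x z * ENNReal.ofReal (f y ^ 3))
            + k x y * k x z * ENNReal.ofReal (f z ^ 3) := fun z => by ring
      rw [lintegral_congr e,
        lintegral_add_left (show Measurable fun z => k x y * k x z * ENNReal.ofReal (f x ^ 3)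
            + k x y * k x z * ENNReal.ofReal (f y ^ 3) from
          ((measurable_const.mul (hkx x)).mul measurable_const).add
          ((measurable_const.mul (hkx x)).mul measurable_const)),
        lintegral_add_left (show Measurable fun z => k x y * k x z * ENNReal.ofReal (f x ^ 3) from
          (measurable_const.mul (hkx x)).mul measurable_const)]
    have hy : ∀ x : (EuclideanSpace ℝ (Fin d)), (∫⁻ y in W, ∫⁻ z in W, k x y * k x z *
          (ENNReal.ofReal (f x ^ 3) + ENNReal.ofReal (f y ^ 3) + ENNReal.ofReal (f z ^ 3)))
        = (∫⁻ y in W, ∫⁻ z in W, k x y * k x z * ENNReal.ofReal (f x ^ 3))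
          + (∫⁻ y in W, ∫⁻ z in W, k x y * k x z * ENNReal.ofReal (f y ^ 3))
          + (∫⁻ y in W, ∫⁻ z in W, k x y * k x z * ENNReal.ofReal (f z ^ 3)) := by
      intro x
      have m1 : Measurable fun p : (EuclideanSpace ℝ (Fin d)) × (EuclideanSpace ℝ (Fin d)) => k x p.1 * k x p.2 * ENNReal.ofReal (f x ^ 3) :=
        (((hkx x).comp measurable_fst).mul ((hkx x).comp measurable_snd)).mul measurable_const
      have m2 : Measurable fun p : (EuclideanSpace ℝ (Fin d)) × (EuclideanSpace ℝ (Fin d)) => k x p.1 * k x p.2 * ENNReal.ofReal (f p.1 ^ 3) :=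
        (((hkx x).comp measurable_fst).mul ((hkx x).comp measurable_snd)).mul
          (hH.comp measurable_fst)
      rw [lintegral_congr (hz x),
        lintegral_add_left (show Measurable fun y =>
            (∫⁻ z in W, k x y * k x z * ENNReal.ofReal (f x ^ 3))
            + ∫⁻ z in W, k x y * k x z * ENNReal.ofReal (f y ^ 3) from
          (m1.lintegral_prod_right').add (m2.lintegral_prod_right')),
        lintegral_add_left m1.lintegral_prod_right']
    have N1 : Measurable fun q : ((EuclideanSpace ℝ (Fin d)) × (EuclideanSpace ℝ (Fin d))) × (EuclideanSpace ℝ (Fin d)) =>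
        k q.1.1 q.1.2 * k q.1.1 q.2 * ENNReal.ofReal (f q.1.1 ^ 3) :=
      ((hK.comp (measurable_fst.fst.prodMk measurable_fst.snd)).mul
        (hK.comp (measurable_fst.fst.prodMk measurable_snd))).mul
        (hH.comp measurable_fst.fst)
    have N2 : Measurable fun q : ((EuclideanSpace ℝ (Fin d)) × (EuclideanSpace ℝ (Fin d))) × (EuclideanSpace ℝ (Fin d)) =>
        k q.1.1 q.1.2 * k q.1.1 q.2 * ENNReal.ofReal (f q.1.2 ^ 3) :=
      ((hK.comp (measurable_fst.fst.prodMk measurable_fst.snd)).mul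
        (hK.comp (measurable_fst.fst.prodMk measurable_snd))).mul
        (hH.comp measurable_fst.snd)
    rw [lintegral_congr hy,
      lintegral_add_left (show Measurable fun x =>
          (∫⁻ y in W, ∫⁻ z in W, k x y * k x z * ENNReal.ofReal (f x ^ 3))
          + ∫⁻ y in W, ∫⁻ z in W, k x y * k x z * ENNReal.ofReal (f y ^ 3) from
        (measT _ N1).add (measT _ N2)),
      lintegral_add_left (measT _ N1)]
  -- put everything together
  calc ∫⁻ x in W, (∫⁻ y in W,
          ENNReal.ofReal (if ‖x - y‖ ≤ r then ‖x - y‖ ^ β * f y else 0)) ^ 2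
          * ENNReal.ofReal (f x)
      = ∫⁻ x in W, (∫⁻ y in W, k x y * ENNReal.ofReal (f y)) ^ 2 * ENNReal.ofReal (f x) := by
        refine lintegral_congr fun x => ?_
        congr 2
        refine lintegral_congr fun y => ?_
        by_cases hxy : ‖x - y‖ ≤ r
        · simp only [hk_def, hxy, if_true]
          exact ENNReal.ofReal_mul (Real.rpow_nonneg (norm_nonneg _) _)
        · simp [hk_def, hxy]
    _ = ∫⁻ x in W, ∫⁻ y in W, ∫⁻ z in W, k x y * k x z *
          (ENNReal.ofReal (f x) * ENNReal.ofReal (f y) * ENNReal.ofReal (f z)) := by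
        refine lintegral_congr fun x => ?_
        rw [sq, ← lintegral_lintegral_mul
          ((show Measurable fun y => k x y * ENNReal.ofReal (f y) from (hkx x).mul hG).aemeasurable)
          ((show Measurable fun y => k x y * ENNReal.ofReal (f y) from (hkx x).mul hG).aemeasurable),
          ← lintegral_mul_const' (ENNReal.ofReal (f x)) _ ENNReal.ofReal_ne_top]
        refine lintegral_congr fun y => ?_
        rw [← lintegral_mul_const' (ENNReal.ofReal (f x)) _ ENNReal.ofReal_ne_top]
        exact lintegral_congr fun z => by ring
    _ ≤ ∫⁻ x in W, ∫⁻ y in W, ∫⁻ z in W, k x y * k x z *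
          ((ENNReal.ofReal (f x ^ 3) + ENNReal.ofReal (f y ^ 3) + ENNReal.ofReal (f z ^ 3))
            * (3:ℝ≥0∞)⁻¹) :=
        lintegral_mono fun x => lintegral_mono fun y => lintegral_mono fun z =>
          mul_le_mul_right (amgmE x y z) _
    _ = (∫⁻ x in W, ∫⁻ y in W, ∫⁻ z in W, k x y * k x z *
          (ENNReal.ofReal (f x ^ 3) + ENNReal.ofReal (f y ^ 3) + ENNReal.ofReal (f z ^ 3)))
          * (3:ℝ≥0∞)⁻¹ := by
        rw [← lintegral_mul_const' ((3:ℝ≥0∞)⁻¹) _ h3inv]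
        refine lintegral_congr fun x => ?_
        rw [← lintegral_mul_const' ((3:ℝ≥0∞)⁻¹) _ h3inv]
        refine lintegral_congr fun y => ?_
        rw [← lintegral_mul_const' ((3:ℝ≥0∞)⁻¹) _ h3inv]
        exact lintegral_congr fun z => by ring
    _ ≤ (((∫⁻ x in W, ENNReal.ofReal (f x ^ 3)) * (C * C))
          + ((∫⁻ x in W, ENNReal.ofReal (f x ^ 3)) * (C * C))
          + ((∫⁻ x in W, ENNReal.ofReal (f x ^ 3)) * (C * C))) * (3:ℝ≥0∞)⁻¹ := by
        rw [hsplit]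
        exact mul_le_mul_left (add_le_add (add_le_add hI1 hI2) hI3) _
    _ = (C * C) * ∫⁻ x in W, ENNReal.ofReal (f x ^ 3) := by
        have : (((∫⁻ x in W, ENNReal.ofReal (f x ^ 3)) * (C * C))
          + ((∫⁻ x in W, ENNReal.ofReal (f x ^ 3)) * (C * C))
          + ((∫⁻ x in W, ENNReal.ofReal (f x ^ 3)) * (C * C)))
            = ((C * C) * ∫⁻ x in W, ENNReal.ofReal (f x ^ 3)) * 3 := by ring
        rw [this, mul_assoc, ENNReal.mul_inv_cancel (by norm_num) (by norm_num), mul_one]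
    _ = ENNReal.ofReal (((d : ℝ) * κ / (β + (d : ℝ))) ^ 2 * r ^ (2 * β + 2 * (d : ℝ)))
          * ∫⁻ x in W, ENNReal.ofReal (f x ^ 3) := by
        congr 1
        rw [hC_def, ← ENNReal.ofReal_mul (by positivity)]
        congr 1
        have : r ^ (2 * β + 2 * (d:ℝ)) = r ^ (β + (d:ℝ)) * r ^ (β + (d:ℝ)) := by
          rw [← Real.rpow_add hr]; ring_nf
        rw [this]
        ring
end

section
/- For d = 2, W = [0,1]^2, 0 < r ≤ 1, and β > -2, one has ∫_{W×W} 1{‖x-y‖ ≤ r} ‖x-y‖^β d(x,y) = (2π/(β+2)) r^{β+2} - (8/(β+3)) r^{β+3} + (2/(β+4)) r^{β+4}. -/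
open MeasureTheory Filter Metric Set Real
open scoped ENNReal

namespace Stmt12Helpers

lemma int_abs_cos : ∫ x in (-π)..π, |cos x| = 4 := by
  have hcont : ∀ a b : ℝ, IntervalIntegrable (fun x => |cos x|) volume a b :=
    fun a b => (continuous_cos.abs).intervalIntegrable a b
  have h1 : ∫ x in (-π)..(-(π/2)), |cos x| = 1 := by
    rw [intervalIntegral.integral_congr (g := fun x => -cos x) ?_]
    · rw [intervalIntegral.integral_neg, integral_cos]
      simp
    · intro x hx
      rw [uIcc_of_le (by linarith [pi_pos])] at hx
      have : cos x ≤ 0 := by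
        rw [← Real.cos_neg]
        exact Real.cos_nonpos_of_pi_div_two_le_of_le (by linarith [hx.2]) (by linarith [hx.1, pi_pos])
      simp [abs_of_nonpos this]
  have h2 : ∫ x in (-(π/2))..(π/2), |cos x| = 2 := by
    rw [intervalIntegral.integral_congr (g := fun x => cos x) ?_]
    · rw [integral_cos]; simp; norm_num
    · intro x hx
      rw [uIcc_of_le (by linarith [pi_pos])] at hx
      exact abs_of_nonneg (Real.cos_nonneg_of_mem_Icc ⟨by linarith [hx.1], hx.2⟩)
  have h3 : ∫ x in (π/2)..π, |cos x| = 1 := by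
    rw [intervalIntegral.integral_congr (g := fun x => -cos x) ?_]
    · rw [intervalIntegral.integral_neg, integral_cos]
      simp
    · intro x hx
      rw [uIcc_of_le (by linarith [pi_pos])] at hx
      have : cos x ≤ 0 :=
        Real.cos_nonpos_of_pi_div_two_le_of_le hx.1 (by linarith [hx.2, pi_pos])
      simp [abs_of_nonpos this]
  have j1 := intervalIntegral.integral_add_adjacent_intervals (hcont (-π) (-(π/2))) (hcont (-(π/2)) (π/2))
  have j2 := intervalIntegral.integral_add_adjacent_intervals (hcont (-π) (π/2)) (hcont (π/2) π)
  rw [← j2, ← j1, h1, h2, h3]; norm_num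

lemma int_abs_sin : ∫ x in (-π)..π, |sin x| = 4 := by
  have hcont : ∀ a b : ℝ, IntervalIntegrable (fun x => |sin x|) volume a b :=
    fun a b => (continuous_sin.abs).intervalIntegrable a b
  have h1 : ∫ x in (-π)..(0:ℝ), |sin x| = 2 := by
    rw [intervalIntegral.integral_congr (g := fun x => -sin x) ?_]
    · rw [intervalIntegral.integral_neg, integral_sin]
      simp
      norm_num
    · intro x hx
      rw [uIcc_of_le (by linarith [pi_pos])] at hx
      have : sin x ≤ 0 := by
        rw [← neg_neg x, Real.sin_neg]
        simp only [neg_nonpos]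
        exact Real.sin_nonneg_of_nonneg_of_le_pi (by linarith [hx.2]) (by linarith [hx.1])
      simp [abs_of_nonpos this]
  have h2 : ∫ x in (0:ℝ)..π, |sin x| = 2 := by
    rw [intervalIntegral.integral_congr (g := fun x => sin x) ?_]
    · rw [integral_sin]; simp; norm_num
    · intro x hx
      rw [uIcc_of_le (by linarith [pi_pos])] at hx
      exact abs_of_nonneg (Real.sin_nonneg_of_nonneg_of_le_pi hx.1 hx.2)
  rw [← intervalIntegral.integral_add_adjacent_intervals (hcont (-π) 0) (hcont 0 π), h1, h2]
  norm_num

lemma int_abs_sin_cos : ∫ x in (-π)..π, |cos x| * |sin x| = 2 := by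
  have hcont : ∀ a b : ℝ, IntervalIntegrable (fun x => |cos x| * |sin x|) volume a b :=
    fun a b => (continuous_cos.abs.mul continuous_sin.abs).intervalIntegrable a b
  have key : ∀ a b : ℝ, ∫ x in a..b, sin x * cos x = (sin b ^ 2 - sin a ^ 2) / 2 :=
    fun a b => integral_sin_mul_cos₁
  have h1 : ∫ x in (-π)..(-(π/2)), |cos x| * |sin x| = 1/2 := by
    rw [intervalIntegral.integral_congr (g := fun x => sin x * cos x) ?_, key]
    · simp
    · intro x hx
      rw [uIcc_of_le (by linarith [pi_pos])] at hx
      have hc : cos x ≤ 0 := by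
        rw [← Real.cos_neg]
        exact Real.cos_nonpos_of_pi_div_two_le_of_le (by linarith [hx.2]) (by linarith [hx.1, pi_pos])
      have hs : sin x ≤ 0 := by
        rw [← neg_neg x, Real.sin_neg]
        simp only [neg_nonpos]
        exact Real.sin_nonneg_of_nonneg_of_le_pi (by linarith [hx.2, pi_pos]) (by linarith [hx.1])
      simp only [abs_of_nonpos hc, abs_of_nonpos hs]
      ring
  have h2 : ∫ x in (-(π/2))..(0:ℝ), |cos x| * |sin x| = 1/2 := by
    rw [intervalIntegral.integral_congr (g := fun x => -(sin x * cos x)) ?_,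
      intervalIntegral.integral_neg, key]
    · simp
      norm_num
    · intro x hx
      rw [uIcc_of_le (by linarith [pi_pos])] at hx
      have hc : 0 ≤ cos x := Real.cos_nonneg_of_mem_Icc ⟨by linarith [hx.1], by linarith [hx.2, pi_pos]⟩
      have hs : sin x ≤ 0 := by
        rw [← neg_neg x, Real.sin_neg]
        simp only [neg_nonpos]
        exact Real.sin_nonneg_of_nonneg_of_le_pi (by linarith [hx.2]) (by linarith [hx.1, pi_pos])
      simp only [abs_of_nonneg hc, abs_of_nonpos hs]
      ring
  have h3 : ∫ x in (0:ℝ)..(π/2), |cos x| * |sin x| = 1/2 := by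
    rw [intervalIntegral.integral_congr (g := fun x => sin x * cos x) ?_, key]
    · simp
    · intro x hx
      rw [uIcc_of_le (by linarith [pi_pos])] at hx
      have hc : 0 ≤ cos x := Real.cos_nonneg_of_mem_Icc ⟨by linarith [hx.1, pi_pos], hx.2⟩
      have hs : 0 ≤ sin x := Real.sin_nonneg_of_nonneg_of_le_pi hx.1 (by linarith [hx.2, pi_pos])
      simp only [abs_of_nonneg hc, abs_of_nonneg hs]
      ring
  have h4 : ∫ x in (π/2)..π, |cos x| * |sin x| = 1/2 := by
    rw [intervalIntegral.integral_congr (g := fun x => -(sin x * cos x)) ?_,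
      intervalIntegral.integral_neg, key]
    · simp
      norm_num
    · intro x hx
      rw [uIcc_of_le (by linarith [pi_pos])] at hx
      have hc : cos x ≤ 0 :=
        Real.cos_nonpos_of_pi_div_two_le_of_le hx.1 (by linarith [hx.2, pi_pos])
      have hs : 0 ≤ sin x := Real.sin_nonneg_of_nonneg_of_le_pi (by linarith [hx.1, pi_pos]) hx.2
      simp only [abs_of_nonpos hc, abs_of_nonneg hs]
      ring
  have j1 := intervalIntegral.integral_add_adjacent_intervals (hcont (-π) (-(π/2))) (hcont (-(π/2)) 0)
  have j2 := intervalIntegral.integral_add_adjacent_intervals (hcont (-π) 0) (hcont 0 (π/2))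
  have j3 := intervalIntegral.integral_add_adjacent_intervals (hcont (-π) (π/2)) (hcont (π/2) π)
  rw [← j3, ← j2, ← j1, h1, h2, h3, h4]; norm_num

lemma trig_key (s : ℝ) :
    ∫ θ in Ioo (-π) π, (1 - s * |cos θ|) * (1 - s * |sin θ|) = 2 * π - 8 * s + 2 * s ^ 2 := by
  rw [← MeasureTheory.integral_Ioc_eq_integral_Ioo,
    ← intervalIntegral.integral_of_le (by linarith [pi_pos] : -π ≤ π)]
  have expand : ∀ θ : ℝ, (1 - s * |cos θ|) * (1 - s * |sin θ|)
      = 1 - s * |cos θ| - s * |sin θ| + s ^ 2 * (|cos θ| * |sin θ|) := by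
    intro θ; ring
  rw [intervalIntegral.integral_congr (g := fun θ =>
    1 - s * |cos θ| - s * |sin θ| + s ^ 2 * (|cos θ| * |sin θ|)) (fun θ _ => expand θ)]
  have i1 : IntervalIntegrable (fun _ : ℝ => (1:ℝ)) volume (-π) π :=
    intervalIntegrable_const
  have i2 : IntervalIntegrable (fun θ : ℝ => s * |cos θ|) volume (-π) π :=
    (continuous_const.mul continuous_cos.abs).intervalIntegrable _ _
  have i3 : IntervalIntegrable (fun θ : ℝ => s * |sin θ|) volume (-π) π :=
    (continuous_const.mul continuous_sin.abs).intervalIntegrable _ _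
  have i4 : IntervalIntegrable (fun θ : ℝ => s ^ 2 * (|cos θ| * |sin θ|)) volume (-π) π :=
    (continuous_const.mul (continuous_cos.abs.mul continuous_sin.abs)).intervalIntegrable _ _
  rw [intervalIntegral.integral_add ((i1.sub i2).sub i3) i4,
    intervalIntegral.integral_sub (i1.sub i2) i3, intervalIntegral.integral_sub i1 i2,
    intervalIntegral.integral_const_mul, intervalIntegral.integral_const_mul,
    intervalIntegral.integral_const_mul, int_abs_cos, int_abs_sin, int_abs_sin_cos]
  simp
  ring

theorem lintegral_comp_polarCoord_symm (f : ℝ × ℝ → ℝ≥0∞) :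
    (∫⁻ p in polarCoord.target, ENNReal.ofReal p.1 * f (polarCoord.symm p)) = ∫⁻ p, f p := by
  set B : ℝ × ℝ → ℝ × ℝ →L[ℝ] ℝ × ℝ := fun p =>
    LinearMap.toContinuousLinearMap (Matrix.toLin (Module.Basis.finTwoProd ℝ) (Module.Basis.finTwoProd ℝ)
      !![cos p.2, -p.1 * sin p.2; sin p.2, p.1 * cos p.2])
  have A : ∀ p ∈ polarCoord.target, HasFDerivWithinAt polarCoord.symm (B p) polarCoord.target p :=
    fun p _ => (hasFDerivAt_polarCoord_symm p).hasFDerivWithinAt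
  have B_det : ∀ p : ℝ × ℝ, (B p).det = p.1 := by
    intro p
    conv_rhs => rw [← one_mul p.1, ← cos_sq_add_sin_sq p.2]
    simp only [B, neg_mul, LinearMap.det_toContinuousLinearMap, LinearMap.det_toLin,
      Matrix.det_fin_two_of, sub_neg_eq_add]
    ring
  symm
  calc
    ∫⁻ p, f p = ∫⁻ p in polarCoord.source, f p := by
      rw [← setLIntegral_univ]
      exact setLIntegral_congr polarCoord_source_ae_eq_univ.symm
    _ = ∫⁻ p in polarCoord.symm '' polarCoord.target, f p := by
      rw [polarCoord.symm_image_target_eq_source]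
    _ = ∫⁻ p in polarCoord.target, ENNReal.ofReal |(B p).det| * f (polarCoord.symm p) := by
      exact lintegral_image_eq_lintegral_abs_det_fderiv_mul volume
        (polarCoord.open_target.measurableSet) A (polarCoord.symm.injOn) f
    _ = ∫⁻ p in polarCoord.target, ENNReal.ofReal p.1 * f (polarCoord.symm p) := by
      refine setLIntegral_congr_fun polarCoord.open_target.measurableSet
        (fun p hp => ?_)
      rw [B_det, abs_of_pos hp.1]

lemma cov_vol (z : ℝ × ℝ) (h1 : |z.1| ≤ 1) (h2 : |z.2| ≤ 1) :
    volume ((Icc (0:ℝ) 1 ×ˢ Icc (0:ℝ) 1) ∩ {x : ℝ × ℝ | x - z ∈ Icc (0:ℝ) 1 ×ˢ Icc (0:ℝ) 1})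
      = ENNReal.ofReal (1 - |z.1|) * ENNReal.ofReal (1 - |z.2|) := by
  have hset : {x : ℝ × ℝ | x - z ∈ Icc (0:ℝ) 1 ×ˢ Icc (0:ℝ) 1}
      = Icc z.1 (1 + z.1) ×ˢ Icc z.2 (1 + z.2) := by
    ext x
    simp only [mem_setOf_eq, mem_prod, mem_Icc, Prod.fst_sub, Prod.snd_sub]
    constructor
    · rintro ⟨⟨a, b⟩, ⟨c, d⟩⟩; exact ⟨⟨by linarith, by linarith⟩, ⟨by linarith, by linarith⟩⟩
    · rintro ⟨⟨a, b⟩, ⟨c, d⟩⟩; exact ⟨⟨by linarith, by linarith⟩, ⟨by linarith, by linarith⟩⟩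
  have key : ∀ t : ℝ, |t| ≤ 1 → (1:ℝ) ⊓ (1 + t) - (0:ℝ) ⊔ t = 1 - |t| := by
    intro t ht
    rcases le_or_gt 0 t with h | h
    · rw [abs_of_nonneg h, sup_eq_right.mpr h, inf_eq_left.mpr (by linarith : (1:ℝ) ≤ 1 + t)]
    · rw [abs_of_neg h, sup_eq_left.mpr h.le, inf_eq_right.mpr (by linarith : 1 + t ≤ (1:ℝ))]
      ring
  rw [hset, Set.prod_inter_prod, Measure.volume_eq_prod, Measure.prod_prod, Icc_inter_Icc,
    Icc_inter_Icc, Real.volume_Icc, Real.volume_Icc, key z.1 h1, key z.2 h2]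

lemma cov (g : ℝ × ℝ → ℝ≥0∞) (hg : Measurable g) :
    ∫⁻ p in (Icc (0:ℝ) 1 ×ˢ Icc (0:ℝ) 1) ×ˢ (Icc (0:ℝ) 1 ×ˢ Icc (0:ℝ) 1),
        g (p.1 - p.2)
      = ∫⁻ z, g z * volume ((Icc (0:ℝ) 1 ×ˢ Icc (0:ℝ) 1)
          ∩ {x : ℝ × ℝ | x - z ∈ Icc (0:ℝ) 1 ×ˢ Icc (0:ℝ) 1}) := by
  set T : Set (ℝ × ℝ) := Icc (0:ℝ) 1 ×ˢ Icc (0:ℝ) 1 with hTdef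
  have hT : MeasurableSet T := (measurableSet_Icc).prod (measurableSet_Icc)
  have hSz : ∀ z : ℝ × ℝ, MeasurableSet {w : ℝ × ℝ | w - z ∈ T} :=
    fun z => (measurable_id.sub_const z) hT
  have hmeas_sub : Measurable fun p : (ℝ × ℝ) × (ℝ × ℝ) => g (p.1 - p.2) :=
    hg.comp (measurable_fst.sub measurable_snd)
  -- Tonelli
  rw [show (volume : Measure ((ℝ × ℝ) × (ℝ × ℝ))) = Measure.prod volume volume from
      Measure.volume_eq_prod _ _, ← Measure.prod_restrict,
    lintegral_prod _ hmeas_sub.aemeasurable]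
  -- inner substitution for each x
  have inner_eq : ∀ x : ℝ × ℝ, ∫⁻ y in T, g (x - y)
      = ∫⁻ z, {w : ℝ × ℝ | w - z ∈ T}.indicator (fun _ => g z) x := by
    intro x
    rw [← lintegral_indicator hT]
    have sub_mp : MeasurePreserving (fun y : ℝ × ℝ => x - y) volume volume :=
      Measure.measurePreserving_sub_left volume x
    have hfun : Measurable fun y : ℝ × ℝ => T.indicator (fun w => g (x - w)) y :=
      ((hg.comp ((measurable_const.sub measurable_id))).indicator hT)
    rw [← sub_mp.lintegral_comp hfun]
    refine lintegral_congr fun z => ?_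
    by_cases hz : x - z ∈ T <;>
      simp [Set.indicator_apply, hz, sub_sub_cancel]
  simp only [inner_eq]
  -- absorb outer restriction into an indicator
  rw [← lintegral_indicator hT]
  have outer_eq : ∀ x : ℝ × ℝ,
      T.indicator (fun x => ∫⁻ z, {w : ℝ × ℝ | w - z ∈ T}.indicator (fun _ => g z) x) x
        = ∫⁻ z, (T ∩ {w : ℝ × ℝ | w - z ∈ T}).indicator (fun _ => g z) x := by
    intro x
    by_cases hx : x ∈ T
    · rw [Set.indicator_of_mem hx]
      refine lintegral_congr fun z => ?_
      by_cases hz : x - z ∈ T <;>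
        simp [Set.indicator_apply, hz, hx]
    · rw [Set.indicator_of_notMem hx]
      symm
      simp only [Set.indicator_apply, mem_inter_iff]
      have : ∀ z : ℝ × ℝ, (if x ∈ T ∧ x ∈ {w : ℝ × ℝ | w - z ∈ T} then g z else 0) = 0 := by
        intro z; simp [hx]
      simp only [this, lintegral_zero]
  simp only [outer_eq]
  -- swap and compute inner measure
  rw [lintegral_lintegral_swap]
  · refine lintegral_congr fun z => ?_
    rw [lintegral_indicator_const (hT.inter (hSz z))]
  · -- AEMeasurable of uncurried function
    have : (fun p : (ℝ × ℝ) × (ℝ × ℝ) =>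
        (T ∩ {w : ℝ × ℝ | w - p.2 ∈ T}).indicator (fun _ => g p.2) p.1)
        = ((Prod.fst ⁻¹' T) ∩ {p : (ℝ × ℝ) × (ℝ × ℝ) | p.1 - p.2 ∈ T}).indicator
            (fun p => g p.2) := by
      funext p
      by_cases h1 : p.1 ∈ T <;> by_cases h2 : p.1 - p.2 ∈ T <;>
        simp [Set.indicator_apply, h1, h2]
    exact (this ▸ ((hg.comp measurable_snd).indicator
      ((measurable_fst hT).inter ((measurable_fst.sub measurable_snd) hT)))).aemeasurable

lemma rpow_expand (β s : ℝ) (hs : 0 < s) :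
    s * (s ^ β * (2 * π - 8 * s + 2 * s ^ 2))
      = 2 * π * s ^ (β + 1) - 8 * s ^ (β + 2) + 2 * s ^ (β + 3) := by
  have e1 : s ^ (β + 1) = s ^ β * s := Real.rpow_add_one hs.ne' β
  have e2 : s ^ (β + 2) = s ^ (β + 1) * s := by
    rw [show β + 2 = (β + 1) + 1 by ring, Real.rpow_add_one hs.ne']
  have e3 : s ^ (β + 3) = s ^ (β + 2) * s := by
    rw [show β + 3 = (β + 2) + 1 by ring, Real.rpow_add_one hs.ne']
  rw [e3, e2, e1]; ring

lemma quad_nonneg (s : ℝ) (hs1 : s ≤ 1) : 0 ≤ 2 * π - 8 * s + 2 * s ^ 2 := by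
  nlinarith [pi_gt_three, sq_nonneg (1 - s), sq_nonneg s]

lemma inner_angular (r β : ℝ) (hr1 : r ≤ 1) {s : ℝ} (hs : 0 < s) :
    ∫⁻ θ in Ioo (-π) π,
        ENNReal.ofReal s *
          (ENNReal.ofReal (if Real.sqrt ((s * cos θ) ^ 2 + (s * sin θ) ^ 2) ≤ r
              then Real.sqrt ((s * cos θ) ^ 2 + (s * sin θ) ^ 2) ^ β else 0) *
            (ENNReal.ofReal (1 - |s * cos θ|) * ENNReal.ofReal (1 - |s * sin θ|)))
      = if s ≤ r then ENNReal.ofReal (2 * π * s ^ (β + 1) - 8 * s ^ (β + 2) + 2 * s ^ (β + 3))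
          else 0 := by
  have hsqrt : ∀ θ : ℝ, Real.sqrt ((s * cos θ) ^ 2 + (s * sin θ) ^ 2) = s := by
    intro θ
    have h : (s * cos θ) ^ 2 + (s * sin θ) ^ 2 = s ^ 2 := by
      have := sin_sq_add_cos_sq θ; nlinarith
    rw [h, Real.sqrt_sq hs.le]
  simp only [hsqrt]
  by_cases hsr : s ≤ r
  · simp only [if_pos hsr]
    have habs_cos : ∀ θ : ℝ, |s * cos θ| = s * |cos θ| := by
      intro θ; rw [abs_mul, abs_of_pos hs]
    have habs_sin : ∀ θ : ℝ, |s * sin θ| = s * |sin θ| := by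
      intro θ; rw [abs_mul, abs_of_pos hs]
    have hcos_nn : ∀ θ : ℝ, 0 ≤ 1 - s * |cos θ| := by
      intro θ
      have := abs_cos_le_one θ
      nlinarith
    have hsin_nn : ∀ θ : ℝ, 0 ≤ 1 - s * |sin θ| := by
      intro θ
      have := abs_sin_le_one θ
      nlinarith
    have hmerge : ∀ θ : ℝ,
        ENNReal.ofReal s * (ENNReal.ofReal (s ^ β) *
          (ENNReal.ofReal (1 - |s * cos θ|) * ENNReal.ofReal (1 - |s * sin θ|)))
        = ENNReal.ofReal (s * (s ^ β *
            ((1 - s * |cos θ|) * (1 - s * |sin θ|)))) := by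
      intro θ
      rw [habs_cos, habs_sin, ENNReal.ofReal_mul hs.le, ENNReal.ofReal_mul (rpow_nonneg hs.le β),
        ENNReal.ofReal_mul (hcos_nn θ)]
    simp only [hmerge]
    rw [← MeasureTheory.ofReal_integral_eq_lintegral_ofReal]
    · congr 1
      rw [MeasureTheory.integral_const_mul, MeasureTheory.integral_const_mul, trig_key,
        rpow_expand β s hs]
    · have hcont : Continuous fun θ : ℝ =>
          s * (s ^ β * ((1 - s * |cos θ|) * (1 - s * |sin θ|))) := by
        continuity
      exact (hcont.integrableOn_Icc (a := -π) (b := π)).mono_set Ioo_subset_Icc_self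
    · filter_upwards with θ
      have := hcos_nn θ; have := hsin_nn θ
      positivity
  · simp [hsr]

lemma radial_int (r β : ℝ) (hr0 : 0 < r) (hβ : -2 < β) :
    IntegrableOn (fun s : ℝ => 2 * π * s ^ (β + 1) - 8 * s ^ (β + 2) + 2 * s ^ (β + 3))
      (Ioc (0:ℝ) r) := by
  rw [← intervalIntegrable_iff_integrableOn_Ioc_of_le hr0.le]
  have i1 : IntervalIntegrable (fun s : ℝ => s ^ (β + 1)) volume 0 r :=
    intervalIntegral.intervalIntegrable_rpow' (by linarith)
  have i2 : IntervalIntegrable (fun s : ℝ => s ^ (β + 2)) volume 0 r :=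
    intervalIntegral.intervalIntegrable_rpow' (by linarith)
  have i3 : IntervalIntegrable (fun s : ℝ => s ^ (β + 3)) volume 0 r :=
    intervalIntegral.intervalIntegrable_rpow' (by linarith)
  exact ((i1.const_mul _).sub (i2.const_mul _)).add (i3.const_mul _)

lemma radial_val (r β : ℝ) (hr0 : 0 < r) (hβ : -2 < β) :
    ∫ s in Ioc (0:ℝ) r, (2 * π * s ^ (β + 1) - 8 * s ^ (β + 2) + 2 * s ^ (β + 3))
      = 2 * π / (β + 2) * r ^ (β + 2) - 8 / (β + 3) * r ^ (β + 3)
        + 2 / (β + 4) * r ^ (β + 4) := by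
  rw [← intervalIntegral.integral_of_le hr0.le]
  have i1 : IntervalIntegrable (fun s : ℝ => s ^ (β + 1)) volume 0 r :=
    intervalIntegral.intervalIntegrable_rpow' (by linarith)
  have i2 : IntervalIntegrable (fun s : ℝ => s ^ (β + 2)) volume 0 r :=
    intervalIntegral.intervalIntegrable_rpow' (by linarith)
  have i3 : IntervalIntegrable (fun s : ℝ => s ^ (β + 3)) volume 0 r :=
    intervalIntegral.intervalIntegrable_rpow' (by linarith)
  have v1 : ∫ s in (0:ℝ)..r, s ^ (β + 1) = r ^ (β + 2) / (β + 2) := by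
    rw [integral_rpow (Or.inl (by linarith))]
    rw [Real.zero_rpow (by linarith : β + 1 + 1 ≠ 0)]
    ring_nf
  have v2 : ∫ s in (0:ℝ)..r, s ^ (β + 2) = r ^ (β + 3) / (β + 3) := by
    rw [integral_rpow (Or.inl (by linarith))]
    rw [Real.zero_rpow (by linarith : β + 2 + 1 ≠ 0)]
    ring_nf
  have v3 : ∫ s in (0:ℝ)..r, s ^ (β + 3) = r ^ (β + 4) / (β + 4) := by
    rw [integral_rpow (Or.inl (by linarith))]
    rw [Real.zero_rpow (by linarith : β + 3 + 1 ≠ 0)]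
    ring_nf
  rw [intervalIntegral.integral_add ((i1.const_mul _).sub (i2.const_mul _)) (i3.const_mul _),
    intervalIntegral.integral_sub (i1.const_mul _) (i2.const_mul _),
    intervalIntegral.integral_const_mul, intervalIntegral.integral_const_mul,
    intervalIntegral.integral_const_mul, v1, v2, v3]
  ring

lemma radial_nonneg (r β : ℝ) (hr1 : r ≤ 1) {s : ℝ} (hs : 0 < s) (hsr : s ≤ r) :
    0 ≤ 2 * π * s ^ (β + 1) - 8 * s ^ (β + 2) + 2 * s ^ (β + 3) := by
  rw [← rpow_expand β s hs]
  have h1 : (0:ℝ) ≤ s ^ β := rpow_nonneg hs.le β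
  have h2 := quad_nonneg s (by linarith)
  positivity

end Stmt12Helpers

open Stmt12Helpers

/-- For `d = 2`, `W = [0,1]²`, `0 < r ≤ 1` and `β > -2`:
`∫_{W×W} 1{‖x-y‖≤r} ‖x-y‖^β d(x,y)
  = (2π/(β+2)) r^{β+2} - (8/(β+3)) r^{β+3} + (2/(β+4)) r^{β+4}`. -/
theorem stmt12 (r β : ℝ) (hr0 : 0 < r) (hr1 : r ≤ 1) (hβ : -2 < β) :
    ∫ p in ({x : EuclideanSpace ℝ (Fin 2) | ∀ i, x i ∈ Icc (0:ℝ) 1} ×ˢ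
        {x : EuclideanSpace ℝ (Fin 2) | ∀ i, x i ∈ Icc (0:ℝ) 1}),
      (if ‖p.1 - p.2‖ ≤ r then ‖p.1 - p.2‖ ^ β else 0)
      = (2 * π / (β + 2)) * r ^ (β + 2) - (8 / (β + 3)) * r ^ (β + 3)
        + (2 / (β + 4)) * r ^ (β + 4) := by
  classical
  set S : Set (EuclideanSpace ℝ (Fin 2)) := {x | ∀ i, x i ∈ Icc (0:ℝ) 1} with hSdef
  set T : Set (ℝ × ℝ) := Icc (0:ℝ) 1 ×ˢ Icc (0:ℝ) 1 with hTdef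
  set f0 : ℝ × ℝ → ℝ := fun z =>
    if Real.sqrt (z.1 ^ 2 + z.2 ^ 2) ≤ r then Real.sqrt (z.1 ^ 2 + z.2 ^ 2) ^ β else 0 with hf0def
  have hsqm : Measurable fun z : ℝ × ℝ => Real.sqrt (z.1 ^ 2 + z.2 ^ 2) :=
    (continuous_sqrt.comp ((continuous_fst.pow 2).add (continuous_snd.pow 2))).measurable
  have hf0m : Measurable f0 := by
    apply Measurable.ite
    · exact measurableSet_le hsqm measurable_const
    · exact Measurable.pow hsqm measurable_const
    · exact measurable_const
  set F : EuclideanSpace ℝ (Fin 2) × EuclideanSpace ℝ (Fin 2) → ℝ := fun p =>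
    if ‖p.1 - p.2‖ ≤ r then ‖p.1 - p.2‖ ^ β else 0 with hFdef
  have hFm : Measurable F := by
    apply Measurable.ite
    · exact measurableSet_le
        ((continuous_fst.sub continuous_snd).norm.measurable) measurable_const
    · exact Measurable.pow ((continuous_fst.sub continuous_snd).norm.measurable) measurable_const
    · exact measurable_const
  have hFnn : 0 ≤ᵐ[volume.restrict (S ×ˢ S)] F := by
    filter_upwards with p
    by_cases h : ‖p.1 - p.2‖ ≤ r
    · simp only [F, if_pos h]; exact rpow_nonneg (norm_nonneg _) β
    · simp only [F, if_neg h]; exact le_refl 0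
  rw [show (∫ p in S ×ˢ S, (if ‖p.1 - p.2‖ ≤ r then ‖p.1 - p.2‖ ^ β else 0))
      = ∫ p in S ×ˢ S, F p from rfl,
    MeasureTheory.integral_eq_lintegral_of_nonneg_ae hFnn hFm.aestronglyMeasurable]
  -- the euclidean → ℝ×ℝ transfer
  set e : EuclideanSpace ℝ (Fin 2) ≃ᵐ ℝ × ℝ :=
    (MeasurableEquiv.toLp 2 (Fin 2 → ℝ)).symm.trans (MeasurableEquiv.finTwoArrow) with hedef
  have he : MeasurePreserving e volume volume :=
    (MeasureTheory.volume_preserving_finTwoArrow ℝ).comp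
      (EuclideanSpace.volume_preserving_symm_measurableEquiv_toLp (Fin 2))
  set E : (EuclideanSpace ℝ (Fin 2) × EuclideanSpace ℝ (Fin 2)) ≃ᵐ (ℝ × ℝ) × (ℝ × ℝ) :=
    e.prodCongr e with hEdef
  have hE : MeasurePreserving E volume volume := he.prod he
  have norm2 : ∀ x : EuclideanSpace ℝ (Fin 2), ‖x‖ = Real.sqrt ((x 0) ^ 2 + (x 1) ^ 2) := by
    intro x
    rw [EuclideanSpace.norm_eq]
    simp [Fin.sum_univ_two, Real.norm_eq_abs, sq_abs]
  have key : ∀ p : EuclideanSpace ℝ (Fin 2) × EuclideanSpace ℝ (Fin 2),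
      ENNReal.ofReal (F p) = ENNReal.ofReal (f0 ((E p).1 - (E p).2)) := by
    intro p
    have h1 : ((E p).1 - (E p).2).1 = (p.1 - p.2) 0 := rfl
    have h2 : ((E p).1 - (E p).2).2 = (p.1 - p.2) 1 := rfl
    simp only [F, f0, h1, h2, norm2 (p.1 - p.2)]
  have hmemS : ∀ x : EuclideanSpace ℝ (Fin 2), x ∈ S ↔ e x ∈ T := by
    intro x
    simp only [hSdef, mem_setOf_eq, Fin.forall_fin_two, hTdef, Set.mem_prod]
    exact Iff.rfl
  have himage : E '' (S ×ˢ S) = T ×ˢ T := by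
    have hpre : S ×ˢ S = E ⁻¹' (T ×ˢ T) := by
      ext p
      simp only [Set.mem_prod, Set.mem_preimage]
      rw [hmemS p.1, hmemS p.2]
      exact Iff.rfl
    rw [hpre, Set.image_preimage_eq _ E.surjective]
  have step1 : ∫⁻ p in S ×ˢ S, ENNReal.ofReal (F p)
      = ∫⁻ q in T ×ˢ T, ENNReal.ofReal (f0 (q.1 - q.2)) := by
    calc ∫⁻ p in S ×ˢ S, ENNReal.ofReal (F p)
        = ∫⁻ p in S ×ˢ S,
            (fun q : (ℝ × ℝ) × (ℝ × ℝ) => ENNReal.ofReal (f0 (q.1 - q.2))) (E p) :=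
          lintegral_congr fun p => key p
      _ = ∫⁻ q in E '' (S ×ˢ S), ENNReal.ofReal (f0 (q.1 - q.2)) := by
          exact hE.setLIntegral_comp_emb E.measurableEmbedding
            (fun q => ENNReal.ofReal (f0 (q.1 - q.2))) (S ×ˢ S)
      _ = ∫⁻ q in T ×ˢ T, ENNReal.ofReal (f0 (q.1 - q.2)) := by rw [himage]
  rw [step1]
  -- covariance
  have hg : Measurable fun z : ℝ × ℝ => ENNReal.ofReal (f0 z) :=
    ENNReal.measurable_ofReal.comp hf0m
  rw [cov _ hg]
  -- replace volume by product form
  have step2 : ∫⁻ z, ENNReal.ofReal (f0 z) * volume (T ∩ {x : ℝ × ℝ | x - z ∈ T})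
      = ∫⁻ z, ENNReal.ofReal (f0 z)
          * (ENNReal.ofReal (1 - |z.1|) * ENNReal.ofReal (1 - |z.2|)) := by
    refine lintegral_congr fun z => ?_
    by_cases h : Real.sqrt (z.1 ^ 2 + z.2 ^ 2) ≤ r
    · have hb1 : |z.1| ≤ 1 := by
        rw [← Real.sqrt_sq_eq_abs]
        calc Real.sqrt (z.1 ^ 2) ≤ Real.sqrt (z.1 ^ 2 + z.2 ^ 2) :=
              Real.sqrt_le_sqrt (by nlinarith [sq_nonneg z.2])
          _ ≤ r := h
          _ ≤ 1 := hr1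
      have hb2 : |z.2| ≤ 1 := by
        rw [← Real.sqrt_sq_eq_abs]
        calc Real.sqrt (z.2 ^ 2) ≤ Real.sqrt (z.1 ^ 2 + z.2 ^ 2) :=
              Real.sqrt_le_sqrt (by nlinarith [sq_nonneg z.1])
          _ ≤ r := h
          _ ≤ 1 := hr1
      rw [cov_vol z hb1 hb2]
    · have : f0 z = 0 := if_neg h
      simp [this]
  rw [step2]
  -- polar coordinates
  set G : ℝ × ℝ → ℝ≥0∞ := fun z =>
    ENNReal.ofReal (f0 z) * (ENNReal.ofReal (1 - |z.1|) * ENNReal.ofReal (1 - |z.2|)) with hGdef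
  rw [show (∫⁻ z, ENNReal.ofReal (f0 z)
      * (ENNReal.ofReal (1 - |z.1|) * ENNReal.ofReal (1 - |z.2|))) = ∫⁻ z, G z from rfl,
    ← Stmt12Helpers.lintegral_comp_polarCoord_symm G]
  have hsymm : ∀ p : ℝ × ℝ, polarCoord.symm p = (p.1 * cos p.2, p.1 * sin p.2) := fun _ => rfl
  have htarget : polarCoord.target = Ioi (0:ℝ) ×ˢ Ioo (-π) π := rfl
  -- Tonelli on the target
  have hGm : Measurable G := by
    apply Measurable.fun_mul
    · exact ENNReal.measurable_ofReal.comp hf0m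
    · apply Measurable.fun_mul
      · exact ENNReal.measurable_ofReal.comp
          ((measurable_const.sub (measurable_fst.abs)))
      · exact ENNReal.measurable_ofReal.comp
          ((measurable_const.sub (measurable_snd.abs)))
  have hintm : Measurable fun p : ℝ × ℝ => ENNReal.ofReal p.1 * G (polarCoord.symm p) := by
    apply Measurable.fun_mul
    · exact ENNReal.measurable_ofReal.comp measurable_fst
    · exact hGm.comp
        ((measurable_fst.mul (continuous_cos.measurable.comp measurable_snd)).prodMk
          (measurable_fst.mul (continuous_sin.measurable.comp measurable_snd)))
  rw [htarget, show (volume : Measure (ℝ × ℝ)) = Measure.prod volume volume from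
      Measure.volume_eq_prod _ _, ← Measure.prod_restrict,
    lintegral_prod _ hintm.aemeasurable]
  -- inner angular integral
  have step3 : ∫⁻ s in Ioi (0:ℝ), ∫⁻ θ in Ioo (-π) π,
        ENNReal.ofReal (s, θ).1 * G (polarCoord.symm (s, θ))
      = ∫⁻ s in Ioi (0:ℝ), (if s ≤ r then
          ENNReal.ofReal (2 * π * s ^ (β + 1) - 8 * s ^ (β + 2) + 2 * s ^ (β + 3)) else 0) := by
    refine setLIntegral_congr_fun measurableSet_Ioi
      (fun s hs => ?_)
    have hs' : 0 < s := hs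
    rw [← inner_angular r β hr1 hs']
    exact lintegral_congr fun θ => rfl
  rw [step3]
  -- split the radial integral
  have hsplit : Ioc (0:ℝ) r ∪ Ioi r = Ioi (0:ℝ) := Ioc_union_Ioi_eq_Ioi hr0.le
  rw [← hsplit, lintegral_union measurableSet_Ioi (Ioc_disjoint_Ioi le_rfl)]
  have hzero : ∫⁻ s in Ioi r, (if s ≤ r then
      ENNReal.ofReal (2 * π * s ^ (β + 1) - 8 * s ^ (β + 2) + 2 * s ^ (β + 3)) else 0) = 0 := by
    rw [setLIntegral_congr_fun measurableSet_Ioi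
      (fun s hs => if_neg (not_le.mpr hs))]
    simp
  have hpos : ∫⁻ s in Ioc (0:ℝ) r, (if s ≤ r then
      ENNReal.ofReal (2 * π * s ^ (β + 1) - 8 * s ^ (β + 2) + 2 * s ^ (β + 3)) else 0)
      = ∫⁻ s in Ioc (0:ℝ) r,
          ENNReal.ofReal (2 * π * s ^ (β + 1) - 8 * s ^ (β + 2) + 2 * s ^ (β + 3)) :=
    setLIntegral_congr_fun measurableSet_Ioc
      (fun s hs => if_pos hs.2)
  rw [hzero, add_zero, hpos]
  -- convert back to a real integral
  have hnn : 0 ≤ᵐ[volume.restrict (Ioc (0:ℝ) r)]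
      fun s : ℝ => 2 * π * s ^ (β + 1) - 8 * s ^ (β + 2) + 2 * s ^ (β + 3) :=
    (ae_restrict_iff' measurableSet_Ioc).mpr
      (Filter.Eventually.of_forall fun s hs => radial_nonneg r β hr1 hs.1 hs.2)
  rw [← MeasureTheory.ofReal_integral_eq_lintegral_ofReal (radial_int r β hr0 hβ) hnn,
    radial_val r β hr0 hβ, ENNReal.toReal_ofReal]
  rw [← radial_val r β hr0 hβ]
  exact setIntegral_nonneg measurableSet_Ioc fun s hs => radial_nonneg r β hr1 hs.1 hs.2
end

section
/- Let W ⊂ ℝ^d be a measurable set with Vol(W)=1 such that Vol({x ∈ W : d(x, ∂W) ≤ r}) ≤ C_W · r for all small r > 0 and some constant C_W. Let W_{-r} := {x ∈ W : d(x, ∂W) ≥ r} and β > -d. Then for all sufficiently small r > 0, | ∫_{W×W} 1{‖x-y‖ ≤ r} ‖x-y‖^β d(x,y) − (d·κ_d/(β+d)) r^{β+d} | ≤ (d·κ_d/(β+d)) C_W r^{β+d+1}. -/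
open MeasureTheory Filter Metric Set
open scoped ENNReal

private lemma aux_ball_subset {E : Type*} [NormedAddCommGroup E] [NormedSpace ℝ E]
    {W : Set E} {x : E} {r : ℝ} (hxW : x ∈ W) (hr : 0 < r)
    (hinf : r ≤ infDist x (frontier W)) : ball x r ⊆ W := by
  have hdisj : ∀ y ∈ ball x r, y ∉ frontier W := by
    intro y hy hyF
    have h1 : infDist x (frontier W) ≤ dist x y := infDist_le_dist_of_mem hyF
    rw [dist_comm] at h1
    exact absurd (h1.trans_lt (mem_ball.mp hy)) (not_lt.2 hinf)
  have hxint : x ∈ interior W := by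
    by_contra h
    exact hdisj x (mem_ball_self hr)
      (by rw [← closure_diff_interior]; exact ⟨subset_closure hxW, h⟩)
  have hsub : ball x r ⊆ interior W ∪ (closure W)ᶜ := by
    intro y hy
    by_cases h1 : y ∈ closure W
    · by_cases h2 : y ∈ interior W
      · exact Or.inl h2
      · exact absurd (by rw [← closure_diff_interior]; exact ⟨h1, h2⟩) (hdisj y hy)
    · exact Or.inr h1
  have hd2 : Disjoint (interior W) (closure W)ᶜ :=
    disjoint_compl_right.mono_left interior_subset_closure
  rcases (convex_ball x r).isPreconnected.subset_or_subset isOpen_interior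
      isClosed_closure.isOpen_compl hd2 hsub with h | h
  · exact h.trans interior_subset
  · exact absurd (subset_closure hxW) (h (mem_ball_self hr))

private lemma aux_shell_pos {E : Type*} [NormedAddCommGroup E] [NormedSpace ℝ E]
    [MeasurableSpace E] [BorelSpace E] {μ : Measure E} [μ.IsOpenPosMeasure]
    {W : Set E} (hvol : 0 < μ W) {r : ℝ} (hr : 0 < r) :
    0 < μ {x ∈ W | infDist x (frontier W) ≤ r} := by
  by_cases hex : ∃ x ∈ W, r / 2 < infDist x (frontier W)
  · obtain ⟨x, hxW, hx⟩ := hex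
    have hFne : (frontier W).Nonempty := by
      rcases eq_empty_or_nonempty (frontier W) with h | h
      · rw [h, infDist_empty] at hx; linarith
      · exact h
    obtain ⟨q, hq⟩ := hFne
    set γ : ℝ → E := fun t => x + t • (q - x) with hγ
    have hγc : Continuous γ := by continuity
    set g : ℝ → ℝ := fun t => infDist (γ t) (frontier W) with hgdef
    have hgc : Continuous g := (continuous_infDist_pt _).comp hγc
    have hg0 : r / 2 < g 0 := by simpa [g, γ] using hx
    have hg1 : g 1 = 0 := by
      have h1 : γ 1 = q := by simp [γ]
      simp only [hgdef, h1]
      exact infDist_zero_of_mem hq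
    set S : Set ℝ := Icc 0 1 ∩ g ⁻¹' Iic (r / 2) with hS
    have hS1 : (1 : ℝ) ∈ S := ⟨⟨zero_le_one, le_refl 1⟩, by
      simp only [mem_preimage, mem_Iic, hg1]; positivity⟩
    have hSc : IsClosed S := isClosed_Icc.inter (isClosed_Iic.preimage hgc)
    have hSb : BddBelow S := ⟨0, fun t ht => ht.1.1⟩
    set t0 := sInf S with ht0
    have ht0S : t0 ∈ S := hSc.csInf_mem ⟨1, hS1⟩ hSb
    have ht0le : g t0 ≤ r / 2 := ht0S.2
    have ht0pos : 0 < t0 := by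
      rcases ht0S.1.1.lt_or_eq with h | h
      · exact h
      · exfalso; rw [← h] at ht0le; linarith
    have hlt : ∀ t, 0 ≤ t → t < t0 → r / 2 < g t := by
      intro t h0 hlt0
      by_contra h; push_neg at h
      exact absurd (csInf_le hSb ⟨⟨h0, hlt0.le.trans ht0S.1.2⟩, h⟩) (not_le.2 hlt0)
    have hge : r / 2 ≤ g t0 := by
      have hne : (nhdsWithin t0 (Ico 0 t0)).NeBot := by
        rw [← mem_closure_iff_nhdsWithin_neBot, closure_Ico ht0pos.ne]
        exact ⟨ht0pos.le, le_refl t0⟩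
      have htt : Filter.Tendsto g (nhdsWithin t0 (Ico 0 t0)) (nhds (g t0)) :=
        (hgc.tendsto t0).mono_left nhdsWithin_le_nhds
      exact ge_of_tendsto htt ((eventually_mem_nhdsWithin (a := t0) (s := Ico 0 t0)).mono
        fun t ht => (hlt t ht.1 ht.2).le)
    have hpos : ∀ t ∈ Icc 0 t0, r / 2 ≤ g t := by
      intro t ht
      rcases ht.2.lt_or_eq with h | h
      · exact (hlt t ht.1 h).le
      · rw [h]; exact hge
    have hximg : x ∈ interior W := by
      have hb : ball x (r / 2) ⊆ interior W :=
        interior_maximal (aux_ball_subset hxW (by positivity) hx.le) isOpen_ball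
      exact hb (mem_ball_self (by positivity))
    have himg : γ '' Icc 0 t0 ⊆ interior W := by
      have hsub : γ '' Icc 0 t0 ⊆ interior W ∪ (closure W)ᶜ := by
        rintro _ ⟨t, ht, rfl⟩
        have hγt : γ t ∉ frontier W := by
          intro hF
          have h1 : g t = 0 := infDist_zero_of_mem hF
          have h2 := hpos t ht
          rw [h1] at h2; linarith
        by_cases h1 : γ t ∈ closure W
        · left
          by_contra h2
          exact hγt (by rw [← closure_diff_interior]; exact ⟨h1, h2⟩)
        · right; exact h1
      rcases (isPreconnected_Icc.image γ hγc.continuousOn).subset_or_subset isOpen_interior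
          isClosed_closure.isOpen_compl
          (disjoint_compl_right.mono_left interior_subset_closure) hsub with h | h
      · exact h
      · exfalso
        have hx0 : γ 0 = x := by simp [γ]
        have hmem : x ∈ (closure W)ᶜ := h ⟨0, ⟨le_refl 0, ht0pos.le⟩, hx0⟩
        exact hmem (subset_closure hxW)
    have hz : γ t0 ∈ interior W := himg ⟨t0, ⟨ht0pos.le, le_refl t0⟩, rfl⟩
    set V : Set E := interior W ∩ (fun y => infDist y (frontier W)) ⁻¹' Iio r with hV
    have hVopen : IsOpen V := isOpen_interior.inter (isOpen_Iio.preimage (continuous_infDist_pt _))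
    have hzV : γ t0 ∈ V := ⟨hz, by simp only [mem_preimage, mem_Iio]; linarith⟩
    have hVsub : V ⊆ {x ∈ W | infDist x (frontier W) ≤ r} :=
      fun y hy => ⟨interior_subset hy.1, le_of_lt hy.2⟩
    exact lt_of_lt_of_le (hVopen.measure_pos μ ⟨γ t0, hzV⟩) (measure_mono hVsub)
  · push_neg at hex
    exact lt_of_lt_of_le hvol
      (measure_mono fun y hy => ⟨hy, (hex y hy).trans (by linarith)⟩)

private lemma aux_radial (d : ℕ) (hd : 1 ≤ d) (β : ℝ) (hβ : -(d : ℝ) < β) (κ : ℝ)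
    (hκ : κ = (volume (closedBall (0 : EuclideanSpace ℝ (Fin d)) 1)).toReal)
    {r : ℝ} (hr : 0 < r) :
    (∫ v : EuclideanSpace ℝ (Fin d), (if ‖v‖ ≤ r then ‖v‖ ^ β else 0)) =
      ((d : ℝ) * κ / (β + (d : ℝ))) * r ^ (β + (d : ℝ)) := by
  haveI : Nonempty (Fin d) := ⟨⟨0, hd⟩⟩
  have hbd : 0 < β + (d : ℝ) := by linarith
  set f : ℝ → ℝ := fun s => if s ≤ r then s ^ β else 0 with hf
  have h1 := integral_fun_norm_addHaar (volume : Measure (EuclideanSpace ℝ (Fin d))) f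
  rw [finrank_euclideanSpace_fin] at h1
  have h2 : (∫ y in Ioi (0:ℝ), y ^ (d - 1) • f y) = r ^ (β + (d : ℝ)) / (β + (d : ℝ)) := by
    have hcong : EqOn (fun y : ℝ => y ^ (d - 1) • f y)
        ((Ioc 0 r).indicator fun y : ℝ => y ^ ((d : ℝ) - 1 + β)) (Ioi 0) := by
      intro y hy
      have hy0 : (0:ℝ) < y := mem_Ioi.mp hy
      dsimp only
      by_cases hyr : y ≤ r
      · rw [indicator_of_mem (mem_Ioc.mpr ⟨hy0, hyr⟩)]
        simp only [hf, if_pos hyr, smul_eq_mul]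
        rw [Real.rpow_add hy0, ← Real.rpow_natCast y (d - 1), Nat.cast_sub hd, Nat.cast_one]
      · rw [indicator_of_notMem (fun h => hyr (mem_Ioc.mp h).2)]
        simp [hf, hyr]
    rw [setIntegral_congr_fun measurableSet_Ioi hcong, setIntegral_indicator measurableSet_Ioc,
      inter_eq_self_of_subset_right Ioc_subset_Ioi_self,
      ← intervalIntegral.integral_of_le hr.le, integral_rpow (Or.inl (by linarith))]
    have he : (d : ℝ) - 1 + β + 1 = β + (d : ℝ) := by ring
    rw [he, Real.zero_rpow (ne_of_gt hbd), sub_zero]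
  have h3 : (∫ v : EuclideanSpace ℝ (Fin d), (if ‖v‖ ≤ r then ‖v‖ ^ β else 0)) =
      ∫ v : EuclideanSpace ℝ (Fin d), f ‖v‖ := rfl
  rw [h3, h1, h2, hκ, Measure.addHaar_closedBall_eq_addHaar_ball]
  simp only [nsmul_eq_mul, smul_eq_mul, measureReal_def]
  ring

/-- If `Vol(W) = 1` and `Vol{x ∈ W : d(x,∂W) ≤ r} ≤ C_W r` for all small `r > 0`, then for all
sufficiently small `r > 0`,
`|∫_{W×W} 1{‖x-y‖≤r}‖x-y‖^β d(x,y) − (d κ_d/(β+d)) r^{β+d}| ≤ (d κ_d/(β+d)) C_W r^{β+d+1}`. -/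
theorem stmt14 (d : ℕ) (hd : 1 ≤ d) (W : Set (EuclideanSpace ℝ (Fin d)))
    (hW : MeasurableSet W) (hvol : volume W = 1) (C : ℝ)
    (hbound : ∀ᶠ r in nhdsWithin (0:ℝ) (Ioi 0),
      volume {x ∈ W | infDist x (frontier W) ≤ r} ≤ ENNReal.ofReal (C * r))
    (β : ℝ) (hβ : -(d:ℝ) < β)
    (κ : ℝ) (hκ : κ = (volume (closedBall (0 : EuclideanSpace ℝ (Fin d)) 1)).toReal) :
    ∀ᶠ r in nhdsWithin (0:ℝ) (Ioi 0),
      |(∫ p in W ×ˢ W, if ‖p.1 - p.2‖ ≤ r then ‖p.1 - p.2‖ ^ β else 0)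
          - ((d : ℝ) * κ / (β + (d : ℝ))) * r ^ (β + (d : ℝ))|
        ≤ ((d : ℝ) * κ / (β + (d : ℝ))) * C * r ^ (β + (d : ℝ) + 1) := by
  haveI : Nonempty (Fin d) := ⟨⟨0, hd⟩⟩
  have hbd : 0 < β + (d : ℝ) := by linarith
  have hd1 : (0:ℝ) < (d:ℝ) := by exact_mod_cast hd
  have hκpos : 0 < κ := by
    rw [hκ]
    exact ENNReal.toReal_pos (measure_closedBall_pos volume _ one_pos).ne'
      measure_closedBall_lt_top.ne
  have hApos : 0 < (d : ℝ) * κ / (β + (d : ℝ)) := div_pos (mul_pos hd1 hκpos) hbd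
  have hCpos : 0 < C := by
    obtain ⟨r₀, hr₀b, hr₀pos⟩ := (hbound.and eventually_mem_nhdsWithin).exists
    have hpos : 0 < volume {x ∈ W | infDist x (frontier W) ≤ r₀} :=
      aux_shell_pos (μ := volume) (W := W) (by rw [hvol]; norm_num) hr₀pos
    have h1 : (0:ℝ≥0∞) < ENNReal.ofReal (C * r₀) := hpos.trans_le hr₀b
    rw [ENNReal.ofReal_pos] at h1
    by_contra h
    push_neg at h
    nlinarith [mem_Ioi.mp hr₀pos]
  have hev1 : ∀ᶠ r in nhdsWithin (0:ℝ) (Ioi 0), r < 1 / C :=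
    Filter.Eventually.filter_mono nhdsWithin_le_nhds (eventually_lt_nhds (by positivity))
  filter_upwards [hbound, eventually_mem_nhdsWithin, hev1] with r hbr hrpos hrC
  have hr : 0 < r := mem_Ioi.mp hrpos
  have hCr : C * r ≤ 1 := by
    rw [lt_div_iff₀ hCpos] at hrC
    nlinarith
  set A : ℝ := (d : ℝ) * κ / (β + (d : ℝ)) with hA
  set f : EuclideanSpace ℝ (Fin d) × EuclideanSpace ℝ (Fin d) → ℝ :=
    fun q => if ‖q.1 - q.2‖ ≤ r then ‖q.1 - q.2‖ ^ β else 0 with hfdef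
  have hfnonneg : ∀ q, 0 ≤ f q := fun q => by
    by_cases h : ‖q.1 - q.2‖ ≤ r <;>
      simp [hfdef, h, Real.rpow_nonneg (norm_nonneg _)]
  have hgm : Measurable (fun v : EuclideanSpace ℝ (Fin d) => if ‖v‖ ≤ r then ‖v‖ ^ β else 0) :=
    Measurable.ite (measurableSet_le continuous_norm.measurable measurable_const)
      (by fun_prop) measurable_const
  have hfmeas : Measurable f := by
    have hc : Continuous fun q : EuclideanSpace ℝ (Fin d) × EuclideanSpace ℝ (Fin d) =>
        ‖q.1 - q.2‖ := continuous_norm.comp (continuous_fst.sub continuous_snd)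
    exact Measurable.ite (measurableSet_le hc.measurable measurable_const)
      (by fun_prop) measurable_const
  have hval := aux_radial d hd β hβ κ hκ hr
  have hrp_pos : 0 < A * r ^ (β + (d : ℝ)) := mul_pos hApos (Real.rpow_pos_of_pos hr _)
  have hint : Integrable (fun v : EuclideanSpace ℝ (Fin d) => if ‖v‖ ≤ r then ‖v‖ ^ β else 0) := by
    by_contra h
    rw [integral_undef h] at hval
    exact absurd hval.symm (ne_of_gt hrp_pos)
  have hlint : (∫⁻ v : EuclideanSpace ℝ (Fin d),
      ENNReal.ofReal (if ‖v‖ ≤ r then ‖v‖ ^ β else 0)) = ENNReal.ofReal (A * r ^ (β + (d : ℝ))) := by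
    rw [← hval]
    exact (ofReal_integral_eq_lintegral_ofReal hint (ae_of_all _ fun v => by
      by_cases h : ‖v‖ ≤ r <;> simp [h, Real.rpow_nonneg (norm_nonneg _)])).symm
  have htrans : ∀ x : EuclideanSpace ℝ (Fin d),
      (∫⁻ y, ENNReal.ofReal (f (x, y))) = ENNReal.ofReal (A * r ^ (β + (d : ℝ))) := by
    intro x
    rw [← hlint]
    exact (Measure.measurePreserving_sub_left volume x).lintegral_comp
      (ENNReal.measurable_ofReal.comp hgm)
  set L : ℝ≥0∞ := ∫⁻ q in W ×ˢ W, ENNReal.ofReal (f q) with hL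
  have hIL : (∫ q in W ×ˢ W, f q) = L.toReal :=
    integral_eq_lintegral_of_nonneg_ae (ae_of_all _ hfnonneg) hfmeas.aestronglyMeasurable
  have hLsplit : L = ∫⁻ x in W, ∫⁻ y in W, ENNReal.ofReal (f (x, y)) := by
    rw [hL, Measure.volume_eq_prod, ← Measure.prod_restrict,
      lintegral_prod _ hfmeas.ennreal_ofReal.aemeasurable]
  have hupper : L ≤ ENNReal.ofReal (A * r ^ (β + (d : ℝ))) := by
    rw [hLsplit]
    calc (∫⁻ x in W, ∫⁻ y in W, ENNReal.ofReal (f (x, y)))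
        ≤ ∫⁻ x in W, ENNReal.ofReal (A * r ^ (β + (d : ℝ))) :=
          lintegral_mono fun x => (htrans x) ▸ setLIntegral_le_lintegral _ _
      _ = ENNReal.ofReal (A * r ^ (β + (d : ℝ))) * volume W := setLIntegral_const _ _
      _ = _ := by rw [hvol, mul_one]
  set Wr : Set (EuclideanSpace ℝ (Fin d)) := W ∩ {x | r ≤ infDist x (frontier W)} with hWrdef
  have hWrvol : ENNReal.ofReal (1 - C * r) ≤ volume Wr := by
    rw [ENNReal.ofReal_sub _ (by positivity), ENNReal.ofReal_one]
    refine tsub_le_iff_right.2 ?_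
    calc (1:ℝ≥0∞) = volume W := hvol.symm
      _ ≤ volume (Wr ∪ {x ∈ W | infDist x (frontier W) ≤ r}) := measure_mono (fun x hx => by
          rcases le_total r (infDist x (frontier W)) with h | h
          · exact Or.inl ⟨hx, h⟩
          · exact Or.inr ⟨hx, h⟩)
      _ ≤ volume Wr + volume {x ∈ W | infDist x (frontier W) ≤ r} := measure_union_le _ _
      _ ≤ volume Wr + ENNReal.ofReal (C * r) := add_le_add le_rfl hbr
  have hptwise : ∀ x ∈ Wr,
      ENNReal.ofReal (A * r ^ (β + (d : ℝ))) ≤ ∫⁻ y in W, ENNReal.ofReal (f (x, y)) := by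
    intro x hx
    have hcb0 : (∫⁻ y in (closedBall x r)ᶜ, ENNReal.ofReal (f (x, y))) = 0 := by
      rw [setLIntegral_congr_fun measurableSet_closedBall.compl
        (fun y hy => ?_), lintegral_zero]
      have hxy : ¬ ‖x - y‖ ≤ r := by
        rw [mem_compl_iff, mem_closedBall, not_le, dist_comm] at hy
        rw [← dist_eq_norm]
        exact not_le.mpr hy
      simp [hfdef, hxy]
    have hae : (closedBall x r : Set (EuclideanSpace ℝ (Fin d))) =ᵐ[volume] ball x r := by
      rw [Filter.eventuallyEq_set]
      have h1 : volume (closedBall x r \ ball x r) = 0 := by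
        rw [closedBall_diff_ball]
        exact Measure.addHaar_sphere volume x r
      have h2 : volume (ball x r \ closedBall x r) = 0 := by
        rw [diff_eq_empty.2 ball_subset_closedBall, measure_empty]
      have := measure_union_null h1 h2
      filter_upwards [measure_eq_zero_iff_ae_notMem.mp this] with y hy
      constructor
      · intro h; by_contra h2; exact hy (Or.inl ⟨h, h2⟩)
      · intro h; exact ball_subset_closedBall h
    calc ENNReal.ofReal (A * r ^ (β + (d : ℝ)))
        = ∫⁻ y, ENNReal.ofReal (f (x, y)) := (htrans x).symm
      _ = (∫⁻ y in closedBall x r, ENNReal.ofReal (f (x, y)))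
          + ∫⁻ y in (closedBall x r)ᶜ, ENNReal.ofReal (f (x, y)) :=
          (lintegral_add_compl _ measurableSet_closedBall).symm
      _ = ∫⁻ y in closedBall x r, ENNReal.ofReal (f (x, y)) := by rw [hcb0, add_zero]
      _ = ∫⁻ y in ball x r, ENNReal.ofReal (f (x, y)) := by
          rw [Measure.restrict_congr_set hae]
      _ ≤ ∫⁻ y in W, ENNReal.ofReal (f (x, y)) :=
          lintegral_mono_set (aux_ball_subset hx.1 hr hx.2)
  have hlower : ENNReal.ofReal (A * r ^ (β + (d : ℝ)) * (1 - C * r)) ≤ L := by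
    rw [ENNReal.ofReal_mul hrp_pos.le, hLsplit]
    calc ENNReal.ofReal (A * r ^ (β + (d : ℝ))) * ENNReal.ofReal (1 - C * r)
        ≤ ENNReal.ofReal (A * r ^ (β + (d : ℝ))) * volume Wr := mul_le_mul_right hWrvol _
      _ = ∫⁻ _x in Wr, ENNReal.ofReal (A * r ^ (β + (d : ℝ))) := (setLIntegral_const _ _).symm
      _ ≤ ∫⁻ x in Wr, ∫⁻ y in W, ENNReal.ofReal (f (x, y)) :=
          setLIntegral_mono hfmeas.ennreal_ofReal.lintegral_prod_right' hptwise
      _ ≤ ∫⁻ x in W, ∫⁻ y in W, ENNReal.ofReal (f (x, y)) :=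
          lintegral_mono_set inter_subset_left
  have hLne : L ≠ ⊤ := ne_top_of_le_ne_top ENNReal.ofReal_ne_top hupper
  have hIub : (∫ q in W ×ˢ W, f q) ≤ A * r ^ (β + (d : ℝ)) := by
    rw [hIL]
    exact ENNReal.toReal_le_of_le_ofReal hrp_pos.le hupper
  have hIlb : A * r ^ (β + (d : ℝ)) * (1 - C * r) ≤ ∫ q in W ×ˢ W, f q := by
    rw [hIL]
    calc A * r ^ (β + (d : ℝ)) * (1 - C * r)
        = (ENNReal.ofReal (A * r ^ (β + (d : ℝ)) * (1 - C * r))).toReal := by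
          rcases le_or_gt (1 - C * r) 0 with h | h
          · rw [ENNReal.ofReal_eq_zero.2 (by nlinarith), ENNReal.toReal_zero]
            nlinarith
          · rw [ENNReal.toReal_ofReal (by nlinarith)]
      _ ≤ L.toReal := ENNReal.toReal_mono hLne hlower
  have hsplit : r ^ (β + (d : ℝ) + 1) = r ^ (β + (d : ℝ)) * r := Real.rpow_add_one hr.ne' _
  have hkey : A * C * r ^ (β + (d : ℝ) + 1) = A * r ^ (β + (d : ℝ)) * (C * r) := by
    rw [hsplit]; ring
  have hACpos : 0 < A * C * r ^ (β + (d : ℝ) + 1) :=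
    mul_pos (mul_pos hApos hCpos) (Real.rpow_pos_of_pos hr _)
  rw [abs_le]
  constructor
  · have : A * r ^ (β + (d : ℝ)) * (1 - C * r)
        = A * r ^ (β + (d : ℝ)) - A * r ^ (β + (d : ℝ)) * (C * r) := by ring
    linarith
  · linarith
end

section
/- Let W ⊂ ℝ^d, let g : W → ℝ be measurable with ∫_W g = 0, assume ∫_W 1{d(x,∂W) ≤ r} |g(x)| dx ≤ C · r for all r > 0, and let β > -d. Then for every r > 0, | ∫_{W×W} 1{‖x-y‖ ≤ r} ‖x-y‖^β g(x) d(x,y) | ≤ (d·κ_d/(β+d)) · C · r^{β+d+1}. -/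
open MeasureTheory Filter Metric Set
open Module intervalIntegral

section
variable {d : ℕ}

-- one-dimensional piece
lemma line_int (β r : ℝ) (hd : 1 ≤ d) (hβ : -(d:ℝ) < β) (hr : 0 < r) :
    IntegrableOn (fun t : ℝ ↦ (if t ≤ r then t ^ β else 0) * t ^ (d - 1)) (Ioi 0) := by
  have hexp : (-1 : ℝ) < β + (d - 1 : ℕ) := by
    have : ((d - 1 : ℕ) : ℝ) = (d : ℝ) - 1 := by
      have : (1:ℕ) ≤ d := hd
      push_cast [Nat.cast_sub this]
      ring
    rw [this]; linarith
  have h1 : IntegrableOn (fun t : ℝ ↦ t ^ (β + (d - 1 : ℕ))) (Ioc 0 r) := by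
    rw [← intervalIntegrable_iff_integrableOn_Ioc_of_le hr.le]
    exact intervalIntegral.intervalIntegrable_rpow' hexp
  have h2 : IntegrableOn (fun t : ℝ ↦ (if t ≤ r then t ^ β else 0) * t ^ (d-1)) (Ioc 0 r) := by
    apply h1.congr_fun ?_ measurableSet_Ioc
    intro t ht
    simp only [if_pos ht.2, ← Real.rpow_natCast t (d-1), ← Real.rpow_add ht.1]
  have h3 : IntegrableOn (fun t : ℝ ↦ (if t ≤ r then t ^ β else 0) * t ^ (d-1)) (Ioi r) := by
    apply (integrable_zero _ _ _).integrableOn.congr_fun ?_ measurableSet_Ioi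
    intro t ht
    simp [not_le.2 (mem_Ioi.mp ht)]
  have := h2.union h3
  rwa [Ioc_union_Ioi_eq_Ioi hr.le] at this

end

section
variable {d : ℕ}

lemma ker_integrable (hd : 1 ≤ d) (β r : ℝ) (hβ : -(d:ℝ) < β) (hr : 0 < r) :
    Integrable (fun x : EuclideanSpace ℝ (Fin d) ↦ if ‖x‖ ≤ r then ‖x‖ ^ β else 0) := by
  haveI : Nonempty (Fin d) := Fin.pos_iff_nonempty.mp hd
  haveI : Nontrivial (EuclideanSpace ℝ (Fin d)) := inferInstance
  set E := EuclideanSpace ℝ (Fin d)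
  set f : ℝ → ℝ := fun t ↦ if t ≤ r then t ^ β else 0 with hf
  have hfr : finrank ℝ E = d := finrank_euclideanSpace_fin
  -- step 6/5 : integrability on the density measure
  have h6 : IntegrableOn
      (fun t : ℝ ↦ f t * ((ENNReal.ofReal (t ^ (finrank ℝ E - 1))).toReal)) (Ioi 0) := by
    apply (line_int β r hd hβ hr).congr_fun ?_ measurableSet_Ioi
    intro t ht
    simp only [hf, hfr,
      ENNReal.toReal_ofReal (pow_nonneg (le_of_lt ht) _), ite_mul, zero_mul]
  have h5 : Integrable (fun y : Ioi (0:ℝ) ↦ f y.1)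
      (Measure.volumeIoiPow (finrank ℝ E - 1)) := by
    rw [Measure.volumeIoiPow, integrable_withDensity_iff
      ((measurable_subtype_coe.pow_const _).ennreal_ofReal)
      (Eventually.of_forall fun x ↦ ENNReal.ofReal_lt_top)]
    have := ((MeasurableEmbedding.subtype_coe measurableSet_Ioi).integrableOn_iff_comap
      (f := fun t : ℝ ↦ f t * ((ENNReal.ofReal (t ^ (finrank ℝ E - 1))).toReal))
      (μ := volume) (s := Ioi (0:ℝ)) (by rw [Subtype.range_coe])).mp h6
    rwa [Subtype.coe_preimage_self, integrableOn_univ] at this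
  have h4 : Integrable (fun z : sphere (0:E) 1 × Ioi (0:ℝ) ↦ f z.2.1)
      ((volume : Measure E).toSphere.prod (Measure.volumeIoiPow (finrank ℝ E - 1))) := by
    have := (integrable_const (1:ℝ) (μ := (volume : Measure E).toSphere)).mul_prod h5
    simpa using this
  have h3 : Integrable (fun x : ({0}ᶜ : Set E) ↦ f ‖x.1‖)
      ((volume : Measure E).comap Subtype.val) := by
    have := ((volume : Measure E).measurePreserving_homeomorphUnitSphereProd.integrable_comp_emb
      (Homeomorph.measurableEmbedding _) (g := fun z : sphere (0:E) 1 × Ioi (0:ℝ) ↦ f z.2.1)).mpr h4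
    convert this using 1
    funext x; simp
  have h2 : IntegrableOn (fun x : E ↦ f ‖x‖) ({0}ᶜ : Set E) volume := by
    rw [MeasurableEmbedding.integrableOn_iff_comap
      (MeasurableEmbedding.subtype_coe (measurableSet_singleton (0:E)).compl)
      (by rw [Subtype.range_coe])]
    rwa [Subtype.coe_preimage_self, integrableOn_univ]
  rwa [IntegrableOn, restrict_compl_singleton] at h2

end

section
variable {d : ℕ}

lemma ker_integral (hd : 1 ≤ d) (β r : ℝ) (hβ : -(d:ℝ) < β) (hr : 0 < r) :
    ∫ x : EuclideanSpace ℝ (Fin d), (if ‖x‖ ≤ r then ‖x‖ ^ β else 0) =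
      ((d:ℝ) * (volume (ball (0 : EuclideanSpace ℝ (Fin d)) 1)).toReal / (β + d)) * r ^ (β + d) := by
  haveI : Nonempty (Fin d) := Fin.pos_iff_nonempty.mp hd
  set E := EuclideanSpace ℝ (Fin d)
  haveI : Nontrivial E := inferInstance
  have hfr : finrank ℝ E = d := finrank_euclideanSpace_fin
  have hcast : ((d - 1 : ℕ) : ℝ) = (d : ℝ) - 1 := by
    push_cast [Nat.cast_sub hd]; ring
  have hsum : 0 < β + d := by linarith
  set f : ℝ → ℝ := fun t ↦ if t ≤ r then t ^ β else 0 with hf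
  have key := integral_fun_norm_addHaar (volume : Measure E) f
  rw [hfr] at key
  have hexp : (-1 : ℝ) < β + (d - 1 : ℕ) := by rw [hcast]; linarith
  -- compute the 1D integral
  have hIoc : ∫ y in Ioc (0:ℝ) r, y ^ (d-1) • f y = r ^ (β + d) / (β + d) := by
    rw [setIntegral_congr_fun measurableSet_Ioc
      (g := fun y : ℝ ↦ y ^ (β + (d - 1 : ℕ)))
      (fun y hy ↦ by
        simp only [hf, smul_eq_mul, if_pos hy.2]
        rw [← Real.rpow_natCast y (d-1), ← Real.rpow_add hy.1]
        ring_nf)]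
    rw [← intervalIntegral.integral_of_le hr.le]
    rw [integral_rpow (Or.inl hexp)]
    rw [Real.zero_rpow (by rw [hcast]; intro h; · nlinarith), hcast]
    ring_nf
  have hIoi : ∫ y in Ioi (r:ℝ), y ^ (d-1) • f y = 0 := by
    rw [setIntegral_congr_fun measurableSet_Ioi (g := fun _ : ℝ ↦ (0:ℝ))
      (fun y hy ↦ by simp [hf, not_le.2 (mem_Ioi.mp hy)])]
    simp
  have hsplit : ∫ y in Ioi (0:ℝ), y ^ (d-1) • f y = r ^ (β + d) / (β + d) := by
    have h2 : IntegrableOn (fun y : ℝ ↦ y ^ (d-1) • f y) (Ioc 0 r) := by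
      have := (line_int β r hd hβ hr).mono_set (Ioc_subset_Ioi_self (a := r) (b := (0:ℝ)))
      apply this.congr_fun (fun y hy ↦ by simp [hf, mul_comm]) measurableSet_Ioc
    have h3 : IntegrableOn (fun y : ℝ ↦ y ^ (d-1) • f y) (Ioi r) := by
      apply (integrable_zero _ _ _).integrableOn.congr_fun
        (fun y hy ↦ by simp [hf, not_le.2 (mem_Ioi.mp hy)]) measurableSet_Ioi
    rw [← Ioc_union_Ioi_eq_Ioi hr.le,
      setIntegral_union (Ioc_disjoint_Ioi le_rfl) measurableSet_Ioi h2 h3, hIoc, hIoi, add_zero]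
  rw [key, hsplit]
  simp only [nsmul_eq_mul, smul_eq_mul, measureReal_def]
  ring

end



/-- If `g` is integrable on `W` with `∫_W g = 0` and
`∫_W 1{d(x,∂W) ≤ r} |g(x)| dx ≤ C r` for all `r > 0`, then for every `r > 0`,
`|∫_{W×W} 1{‖x-y‖≤r}‖x-y‖^β g(x) d(x,y)| ≤ (d κ_d/(β+d)) C r^{β+d+1}`. -/
theorem stmt15 (d : ℕ) (hd : 1 ≤ d) (W : Set (EuclideanSpace ℝ (Fin d)))
    (hW : MeasurableSet W)
    (g : EuclideanSpace ℝ (Fin d) → ℝ) (hg : Measurable g) (hgint : IntegrableOn g W)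
    (hzero : ∫ x in W, g x = 0) (C : ℝ)
    (hbdry : ∀ r > (0:ℝ),
      ∫ x in W, (if infDist x (frontier W) ≤ r then |g x| else 0) ≤ C * r)
    (β : ℝ) (hβ : -(d:ℝ) < β)
    (κ : ℝ) (hκ : κ = (volume (closedBall (0 : EuclideanSpace ℝ (Fin d)) 1)).toReal) :
    ∀ r > (0:ℝ),
      |∫ p in W ×ˢ W, if ‖p.1 - p.2‖ ≤ r then ‖p.1 - p.2‖ ^ β * g p.1 else 0|
        ≤ ((d : ℝ) * κ / (β + (d : ℝ))) * C * r ^ (β + (d : ℝ) + 1) := by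
  intro r hr
  haveI : Nonempty (Fin d) := Fin.pos_iff_nonempty.mp hd
  haveI : Nontrivial (EuclideanSpace ℝ (Fin d)) := inferInstance
  have hsum : (0:ℝ) < β + d := by linarith
  -- the kernel
  set k : EuclideanSpace ℝ (Fin d) → ℝ := fun z ↦ if ‖z‖ ≤ r then ‖z‖ ^ β else 0 with hk
  have hk_meas : Measurable k := by
    apply Measurable.ite (measurableSet_le (by fun_prop) measurable_const) ?_ measurable_const
    fun_prop
  have hk_nonneg : ∀ z, 0 ≤ k z := by
    intro z; dsimp [k]; split
    · positivity
    · exact le_rfl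
  have hk_int : Integrable k := ker_integrable hd β r hβ hr
  set M : ℝ := ∫ z, k z with hMdef
  have hκ' : κ = (volume (ball (0:EuclideanSpace ℝ (Fin d)) 1)).toReal := by
    rw [hκ, Measure.addHaar_closedBall_eq_addHaar_ball]
  have hM : M = ((d:ℝ) * κ / (β + d)) * r ^ (β + d) := by
    rw [hMdef, ker_integral hd β r hβ hr, hκ']
  have hM_nonneg : 0 ≤ M :=
    integral_nonneg hk_nonneg
  -- translated kernel
  have hk_trans_int : ∀ x : EuclideanSpace ℝ (Fin d), Integrable (fun y ↦ k (x - y)) := fun x ↦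
    (integrable_comp_sub_left k x).mpr hk_int
  have hk_trans : ∀ x : EuclideanSpace ℝ (Fin d), ∫ y, k (x - y) = M := fun x ↦
    integral_sub_left_eq_self k volume x
  -- the averaged kernel
  set F : EuclideanSpace ℝ (Fin d) → ℝ := fun x ↦ ∫ y in W, k (x - y) with hF
  have hF_le : ∀ x, F x ≤ M := fun x ↦ by
    rw [← hk_trans x]
    exact setIntegral_le_integral (hk_trans_int x) (Eventually.of_forall fun y ↦ hk_nonneg _)
  have hF_nonneg : ∀ x, 0 ≤ F x := fun x ↦
    setIntegral_nonneg hW fun y _ ↦ hk_nonneg _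
  have hF_meas : StronglyMeasurable F := by
    apply StronglyMeasurable.integral_prod_right'
      (f := fun p : EuclideanSpace ℝ (Fin d) × EuclideanSpace ℝ (Fin d) ↦ k (p.1 - p.2))
    exact (hk_meas.comp (measurable_fst.sub measurable_snd)).stronglyMeasurable
  -- deep points
  have hF_deep : ∀ x ∈ W, r < infDist x (frontier W) → F x = M := by
    intro x hx hxr
    have hfree : ∀ z ∈ closedBall x r, z ∉ frontier W := by
      intro z hz hzf
      exact absurd (infDist_le_dist_of_mem hzf) (not_le.2 (lt_of_le_of_lt
        (by rwa [mem_closedBall, dist_comm] at hz) hxr))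
    have hxint : x ∈ interior W := by
      have hxnf : x ∉ frontier W := by
        intro hxf
        have := infDist_zero_of_mem hxf
        rw [this] at hxr; linarith
      have := closure_eq_self_union_frontier W ▸ subset_closure hx
      rcases (closure_eq_interior_union_frontier W ▸ (subset_closure hx : x ∈ closure W)) with h | h
      · exact h
      · exact absurd h hxnf
    have hsub : closedBall x r ⊆ W := by
      have hconn : IsPreconnected (closedBall x r) := (convex_closedBall x r).isPreconnected
      have hsubU : closedBall x r ⊆ interior W ∪ interior Wᶜ := by
        intro z hz
        have : z ∈ (frontier W)ᶜ := hfree z hz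
        rwa [compl_frontier_eq_union_interior] at this
      have := hconn.subset_left_of_subset_union isOpen_interior isOpen_interior
        (disjoint_left.2 fun a ha ha' ↦ (interior_subset ha' : a ∈ Wᶜ) (interior_subset ha))
        hsubU ⟨x, mem_closedBall_self hr.le, hxint⟩
      exact this.trans interior_subset
    have : F x = ∫ y, k (x - y) := by
      apply setIntegral_eq_integral_of_forall_compl_eq_zero
      intro y hy
      have : ¬ ‖x - y‖ ≤ r := by
        rw [← dist_eq_norm]
        intro h
        exact hy (hsub (by rwa [mem_closedBall, dist_comm]))
      simp [k, this]
    rw [this, hk_trans]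
  -- integrability of F * g on W
  have hFg_int : IntegrableOn (fun x ↦ F x * g x) W := by
    apply Integrable.mono' (hgint.norm.const_mul M)
      ((hF_meas.aestronglyMeasurable).mul hg.aestronglyMeasurable).restrict
    refine Eventually.of_forall fun x ↦ ?_
    simp only [Pi.mul_apply, norm_mul]
    rw [Real.norm_eq_abs (F x), abs_of_nonneg (hF_nonneg x)]
    exact mul_le_mul_of_nonneg_right (hF_le x) (norm_nonneg _)
  have hMg_int : IntegrableOn (fun x ↦ M * g x) W := hgint.const_mul M
  -- integrability of the boundary indicator
  have hind_meas : Measurable fun x : EuclideanSpace ℝ (Fin d) ↦ if infDist x (frontier W) ≤ r then |g x| else 0 := by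
    apply Measurable.ite (measurableSet_le (by fun_prop) measurable_const) hg.abs measurable_const
  have hind_int : IntegrableOn (fun x ↦ if infDist x (frontier W) ≤ r then |g x| else 0) W := by
    apply Integrable.mono' hgint.norm hind_meas.aestronglyMeasurable.restrict
    refine Eventually.of_forall fun x ↦ ?_
    rw [Real.norm_eq_abs]
    split
    · rw [abs_abs, Real.norm_eq_abs]
    · simp [abs_nonneg]
  -- product integrability
  have hprod_meas : AEStronglyMeasurable (fun p : EuclideanSpace ℝ (Fin d) × EuclideanSpace ℝ (Fin d) ↦ k (p.1 - p.2) * g p.1)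
      ((volume.restrict W).prod (volume.restrict W)) :=
    ((hk_meas.comp (measurable_fst.sub measurable_snd)).mul
      (hg.comp measurable_fst)).aestronglyMeasurable
  have hprod : Integrable (fun p : EuclideanSpace ℝ (Fin d) × EuclideanSpace ℝ (Fin d) ↦ k (p.1 - p.2) * g p.1)
      ((volume.restrict W).prod (volume.restrict W)) := by
    rw [integrable_prod_iff hprod_meas]
    constructor
    · refine Eventually.of_forall fun x ↦ ?_
      exact ((hk_trans_int x).integrableOn).mul_const (g x)
    · apply Integrable.mono' (hgint.norm.const_mul M)
        (hprod_meas.norm.integral_prod_right')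
      refine Eventually.of_forall fun x ↦ ?_
      rw [Real.norm_eq_abs]
      have h1 : ∫ y in W, ‖k (x - y) * g x‖ = F x * |g x| := by
        rw [← MeasureTheory.integral_mul_const]
        refine setIntegral_congr_fun hW fun y _ ↦ ?_
        rw [norm_mul, Real.norm_eq_abs (k (x-y)), abs_of_nonneg (hk_nonneg _),
          Real.norm_eq_abs]
      rw [h1, abs_of_nonneg (mul_nonneg (hF_nonneg x) (abs_nonneg _))]
      rw [Real.norm_eq_abs]
      exact mul_le_mul_of_nonneg_right (hF_le x) (abs_nonneg _)
  -- Fubini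
  have hrw : (fun p : EuclideanSpace ℝ (Fin d) × EuclideanSpace ℝ (Fin d) ↦ if ‖p.1 - p.2‖ ≤ r then ‖p.1 - p.2‖ ^ β * g p.1 else 0)
      = fun p : EuclideanSpace ℝ (Fin d) × EuclideanSpace ℝ (Fin d) ↦ k (p.1 - p.2) * g p.1 := by
    funext p
    by_cases h : ‖p.1 - p.2‖ ≤ r <;> simp [k, h]
  have hFub : ∫ p in W ×ˢ W, (if ‖p.1 - p.2‖ ≤ r then ‖p.1 - p.2‖ ^ β * g p.1 else 0)
      = ∫ x in W, F x * g x := by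
    rw [hrw, Measure.volume_eq_prod, ← Measure.prod_restrict, integral_prod _ hprod]
    refine setIntegral_congr_fun hW fun x _ ↦ ?_
    show (∫ y in W, k (x - y) * g x) = F x * g x
    rw [MeasureTheory.integral_mul_const]
  rw [hFub]
  -- subtract the mean
  have hsubmean : ∫ x in W, F x * g x = ∫ x in W, (F x - M) * g x := by
    rw [show (fun x ↦ (F x - M) * g x) = fun x ↦ F x * g x - M * g x by funext x; ring,
      integral_sub hFg_int hMg_int, MeasureTheory.integral_const_mul, hzero, mul_zero, sub_zero]
  rw [hsubmean]
  -- bound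
  have hbound : |∫ x in W, (F x - M) * g x|
      ≤ ∫ x in W, M * (if infDist x (frontier W) ≤ r then |g x| else 0) := by
    refine le_trans (MeasureTheory.norm_integral_le_integral_norm
      (μ := volume.restrict W) (fun x ↦ (F x - M) * g x)) ?_
    apply setIntegral_mono_on ((hFg_int.sub hMg_int).norm.congr ?_) (hind_int.const_mul M) hW ?_
    · refine Eventually.of_forall fun x ↦ ?_
      simp [sub_mul]
    · intro x hx
      rw [norm_mul, Real.norm_eq_abs, Real.norm_eq_abs]
      by_cases h : infDist x (frontier W) ≤ r
      · rw [if_pos h]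
        apply mul_le_mul_of_nonneg_right _ (abs_nonneg _)
        rw [abs_sub_comm, abs_of_nonneg (sub_nonneg.2 (hF_le x))]
        linarith [hF_nonneg x]
      · rw [if_neg h, hF_deep x hx (not_le.1 h)]
        simp
  refine hbound.trans ?_
  rw [MeasureTheory.integral_const_mul]
  have : M * ∫ x in W, (if infDist x (frontier W) ≤ r then |g x| else 0) ≤ M * (C * r) :=
    mul_le_mul_of_nonneg_left (hbdry r hr) hM_nonneg
  refine this.trans_eq ?_
  rw [hM, show β + (d:ℝ) + 1 = (β + d) + 1 by ring, Real.rpow_add hr (β+(d:ℝ)) 1,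
    Real.rpow_one]
  ring
end
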